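/- Let m ≥ 3 be an odd integer and let Ŵ⁺ be the group with presentation ⟨z, s₀, s₁, s_m | z² = s₀² = s₁² = s_m² = (s₁s_m)^m = 1, (s₀s₁)² = (s₀s_m)² = z, z s_i = s_i z for i ∈ {0,1,m}⟩. Then, up to isomorphism, Ŵ⁺ has exactly 2m + 3 irreducible finite-dimensional complex representations; every such representation has dimension 1 or 2, exactly 4 of them have dimension 1, and exactly 2m − 1 of them have dimension 2. -/

import Mathlib

/-- Generators of the double covering of `W = ℤ₂ × D_{2m}`: the central element `z`
and the lifted reflections `s₀`, `s₁`, `s_m`. -/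
inductive Gen : Type
  | z | s0 | s1 | sm
deriving DecidableEq

open FreeGroup

/-- Relators of the positive double covering `Ŵ⁺` of `ℤ₂ × D_{2m}` for odd `m`. -/
def relsOddPos (m : ℕ) : Set (FreeGroup Gen) :=
  { (of Gen.z) ^ 2, (of Gen.s0) ^ 2, (of Gen.s1) ^ 2, (of Gen.sm) ^ 2,
    (of Gen.s1 * of Gen.sm) ^ m,
    (of Gen.s0 * of Gen.s1) ^ 2 * (of Gen.z)⁻¹,
    (of Gen.s0 * of Gen.sm) ^ 2 * (of Gen.z)⁻¹,
    of Gen.z * of Gen.s0 * (of Gen.z)⁻¹ * (of Gen.s0)⁻¹,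
    of Gen.z * of Gen.s1 * (of Gen.z)⁻¹ * (of Gen.s1)⁻¹,
    of Gen.z * of Gen.sm * (of Gen.z)⁻¹ * (of Gen.sm)⁻¹ }

/-- A representation is irreducible if the space is nonzero and the only invariant
subspaces are `⊥` and `⊤`. -/
def IsIrreducibleRep {G : Type*} [Group G] {V : Type*} [AddCommGroup V] [Module ℂ V]
    (ρ : Representation ℂ G V) : Prop :=
  Nontrivial V ∧ ∀ U : Submodule ℂ V, (∀ g : G, ∀ x ∈ U, ρ g x ∈ U) → U = ⊥ ∨ U = ⊤

/-- Isomorphism of representations. -/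
def RepIso {G : Type*} [Group G] {V W : Type*} [AddCommGroup V] [Module ℂ V]
    [AddCommGroup W] [Module ℂ W]
    (ρ : Representation ℂ G V) (σ : Representation ℂ G W) : Prop :=
  ∃ e : V ≃ₗ[ℂ] W, ∀ g v, e (ρ g v) = σ g (e v)


namespace WAux

abbrev Gp (m : ℕ) := PresentedGroup (relsOddPos m)

variable {m : ℕ}

def gz : Gp m := PresentedGroup.of Gen.z
def g0 : Gp m := PresentedGroup.of Gen.s0
def g1 : Gp m := PresentedGroup.of Gen.s1
def gm : Gp m := PresentedGroup.of Gen.sm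
def gr : Gp m := g1 * gm

lemma mk_rel {r : FreeGroup Gen} (h : r ∈ relsOddPos m) :
    PresentedGroup.mk (relsOddPos m) r = 1 :=
  (QuotientGroup.eq_one_iff r).2 (Subgroup.subset_normalClosure h)

lemma relz : (gz : Gp m) ^ 2 = 1 := by
  have := mk_rel (m := m) (r := (of Gen.z) ^ 2) (by simp [relsOddPos])
  simpa [gz, PresentedGroup.of] using this

lemma rel0 : (g0 : Gp m) ^ 2 = 1 := by
  have := mk_rel (m := m) (r := (of Gen.s0) ^ 2) (by simp [relsOddPos])
  simpa [g0, PresentedGroup.of] using this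

lemma rel1 : (g1 : Gp m) ^ 2 = 1 := by
  have := mk_rel (m := m) (r := (of Gen.s1) ^ 2) (by simp [relsOddPos])
  simpa [g1, PresentedGroup.of] using this

lemma relm : (gm : Gp m) ^ 2 = 1 := by
  have := mk_rel (m := m) (r := (of Gen.sm) ^ 2) (by simp [relsOddPos])
  simpa [gm, PresentedGroup.of] using this

lemma relr : (gr : Gp m) ^ m = 1 := by
  have := mk_rel (m := m) (r := (of Gen.s1 * of Gen.sm) ^ m) (by simp [relsOddPos])
  simpa [gr, g1, gm, PresentedGroup.of] using this

lemma rel01 : ((g0 : Gp m) * g1) ^ 2 = gz := by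
  have := mk_rel (m := m) (r := (of Gen.s0 * of Gen.s1) ^ 2 * (of Gen.z)⁻¹)
    (by simp [relsOddPos])
  have h : ((g0 : Gp m) * g1) ^ 2 * gz⁻¹ = 1 := by
    simpa [g0, g1, gz, PresentedGroup.of] using this
  exact mul_inv_eq_one.mp h

lemma rel0m : ((g0 : Gp m) * gm) ^ 2 = gz := by
  have := mk_rel (m := m) (r := (of Gen.s0 * of Gen.sm) ^ 2 * (of Gen.z)⁻¹)
    (by simp [relsOddPos])
  have h : ((g0 : Gp m) * gm) ^ 2 * gz⁻¹ = 1 := by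
    simpa [g0, gm, gz, PresentedGroup.of] using this
  exact mul_inv_eq_one.mp h

lemma zcomm0 : (gz : Gp m) * g0 = g0 * gz := by
  have := mk_rel (m := m) (r := of Gen.z * of Gen.s0 * (of Gen.z)⁻¹ * (of Gen.s0)⁻¹)
    (by simp [relsOddPos])
  have h : (gz : Gp m) * g0 * gz⁻¹ * g0⁻¹ = 1 := by
    simpa [g0, gz, PresentedGroup.of] using this
  have h2 : (gz : Gp m) * g0 * gz⁻¹ = g0 := mul_inv_eq_one.mp h
  exact mul_inv_eq_iff_eq_mul.mp h2

lemma zcomm1 : (gz : Gp m) * g1 = g1 * gz := by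
  have := mk_rel (m := m) (r := of Gen.z * of Gen.s1 * (of Gen.z)⁻¹ * (of Gen.s1)⁻¹)
    (by simp [relsOddPos])
  have h : (gz : Gp m) * g1 * gz⁻¹ * g1⁻¹ = 1 := by
    simpa [g1, gz, PresentedGroup.of] using this
  have h2 : (gz : Gp m) * g1 * gz⁻¹ = g1 := mul_inv_eq_one.mp h
  exact mul_inv_eq_iff_eq_mul.mp h2

lemma zcommm : (gz : Gp m) * gm = gm * gz := by
  have := mk_rel (m := m) (r := of Gen.z * of Gen.sm * (of Gen.z)⁻¹ * (of Gen.sm)⁻¹)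
    (by simp [relsOddPos])
  have h : (gz : Gp m) * gm * gz⁻¹ * gm⁻¹ = 1 := by
    simpa [gm, gz, PresentedGroup.of] using this
  have h2 : (gz : Gp m) * gm * gz⁻¹ = gm := mul_inv_eq_one.mp h
  exact mul_inv_eq_iff_eq_mul.mp h2

lemma gen_sq (x : Gen) : (PresentedGroup.of x : Gp m) ^ 2 = 1 := by
  cases x
  · exact relz
  · exact rel0
  · exact rel1
  · exact relm

lemma gen_inv (x : Gen) : (PresentedGroup.of x : Gp m)⁻¹ = PresentedGroup.of x := by
  have h := gen_sq (m := m) x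
  rw [sq] at h
  exact inv_eq_of_mul_eq_one_right h

lemma z_central (g : Gp m) : gz * g = g * gz := by
  have : g ∈ Subgroup.centralizer {(gz : Gp m)} := by
    apply PresentedGroup.generated_by
    intro j
    rw [Subgroup.mem_centralizer_iff]
    intro h hh
    rcases hh with rfl
    cases j
    · rfl
    · exact zcomm0
    · exact zcomm1
    · exact zcommm
  exact (Subgroup.mem_centralizer_iff.mp this gz rfl)

lemma inv0 : (g0 : Gp m)⁻¹ = g0 := gen_inv Gen.s0
lemma inv1 : (g1 : Gp m)⁻¹ = g1 := gen_inv Gen.s1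
lemma invm : (gm : Gp m)⁻¹ = gm := gen_inv Gen.sm
lemma invz : (gz : Gp m)⁻¹ = gz := gen_inv Gen.z

/-- `g0 * g1 = gz * (g1 * g0)` -/
lemma swap01 : (g0 : Gp m) * g1 = gz * (g1 * g0) := by
  have h : ((g0 : Gp m) * g1) * (g0 * g1) = gz := by rw [← sq]; exact rel01
  have : (g0 : Gp m) * g1 = gz * (g0 * g1)⁻¹ := by
    rw [eq_mul_inv_iff_mul_eq]; exact h
  rw [this, mul_inv_rev, inv0, inv1]

lemma swap0m : (g0 : Gp m) * gm = gz * (gm * g0) := by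
  have h : ((g0 : Gp m) * gm) * (g0 * gm) = gz := by rw [← sq]; exact rel0m
  have : (g0 : Gp m) * gm = gz * (g0 * gm)⁻¹ := by
    rw [eq_mul_inv_iff_mul_eq]; exact h
  rw [this, mul_inv_rev, inv0, invm]

/-- `g0` commutes with `gr = g1 * gm`. -/
lemma comm0r : (g0 : Gp m) * gr = gr * g0 := by
  have h1 : (g0 : Gp m) * (g1 * gm) = gz * (g1 * (g0 * gm)) := by
    rw [← mul_assoc, swap01]; group
  have h2 : (g0 : Gp m) * (g1 * gm) = gz * (g1 * (gz * (gm * g0))) := by rw [h1, swap0m]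
  have h3 : (g0 : Gp m) * (g1 * gm) = (gz * gz) * (g1 * gm * g0) := by
    rw [h2, ← mul_assoc g1 gz, ← z_central g1]; group
  have h4 : (gz : Gp m) * gz = 1 := by rw [← sq]; exact relz
  rw [gr, h3, h4, one_mul]

/-- `gm * g1 = gr⁻¹`. -/
lemma gm_g1 : (gm : Gp m) * g1 = gr⁻¹ := by
  rw [gr, mul_inv_rev, inv1, invm]

/-- `gr * g1 = g1 * gr⁻¹`. -/
lemma conj1r : (gr : Gp m) * g1 = g1 * gr⁻¹ := by
  rw [show (gr : Gp m) * g1 = g1 * (gm * g1) from by rw [gr, mul_assoc], gm_g1]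

/-- `gm = g1 * gr`. -/
lemma gm_eq : (gm : Gp m) = g1 * gr := by
  rw [gr, ← mul_assoc, show (g1 : Gp m) * g1 = 1 from by rw [← sq]; exact rel1, one_mul]

end WAux

namespace WAux

section RepInfra

variable {G : Type*} [Group G] {V W X : Type*} [AddCommGroup V] [Module ℂ V]
  [AddCommGroup W] [Module ℂ W] [AddCommGroup X] [Module ℂ X]

lemma repIso_refl (ρ : Representation ℂ G V) : RepIso ρ ρ :=
  ⟨LinearEquiv.refl ℂ V, fun _ _ => rfl⟩

lemma repIso_symm {ρ : Representation ℂ G V} {σ : Representation ℂ G W}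
    (h : RepIso ρ σ) : RepIso σ ρ := by
  obtain ⟨e, he⟩ := h
  refine ⟨e.symm, fun g w => ?_⟩
  apply e.injective
  rw [he]
  simp

lemma repIso_trans {ρ : Representation ℂ G V} {σ : Representation ℂ G W}
    {τ : Representation ℂ G X} (h1 : RepIso ρ σ) (h2 : RepIso σ τ) : RepIso ρ τ := by
  obtain ⟨e1, he1⟩ := h1
  obtain ⟨e2, he2⟩ := h2
  exact ⟨e1.trans e2, fun g v => by simp [he1, he2]⟩

lemma repIso_irr {ρ : Representation ℂ G V} {σ : Representation ℂ G W}
    (h : RepIso ρ σ) (hρ : IsIrreducibleRep ρ) : IsIrreducibleRep σ := by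
  obtain ⟨e, he⟩ := h
  obtain ⟨hnt, hU⟩ := hρ
  constructor
  · exact e.symm.toEquiv.nontrivial
  · intro U hUinv
    have hinv : ∀ g : G, ∀ x ∈ U.comap (e : V →ₗ[ℂ] W), ρ g x ∈ U.comap (e : V →ₗ[ℂ] W) := by
      intro g x hx
      simp only [Submodule.mem_comap, LinearEquiv.coe_coe] at hx ⊢
      rw [he]
      exact hUinv g _ hx
    have hUU : Submodule.map (e : V →ₗ[ℂ] W) (U.comap (e : V →ₗ[ℂ] W)) = U :=
      Submodule.map_comap_eq_of_surjective e.surjective U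
    rcases hU _ hinv with h' | h'
    · left; rw [← hUU, h', Submodule.map_bot]
    · right; rw [← hUU, h', Submodule.map_top, LinearEquiv.range]

lemma repIso_trace {ρ : Representation ℂ G V} {σ : Representation ℂ G W}
    (h : RepIso ρ σ) (g : G) :
    LinearMap.trace ℂ V (ρ g) = LinearMap.trace ℂ W (σ g) := by
  obtain ⟨e, he⟩ := h
  have hσ : σ g = e.conj (ρ g) := by
    ext w
    rw [LinearEquiv.conj_apply]
    simp only [LinearMap.comp_apply, LinearEquiv.coe_coe]
    rw [he g (e.symm w)]
    simp
  rw [hσ, LinearMap.trace_conj']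

end RepInfra

section SigmaLemmas

variable {m : ℕ} {V : Type*} [AddCommGroup V] [Module ℂ V]
  (σ : Representation ℂ (Gp m) V)

lemma sigma_mul_apply (g h : Gp m) (x : V) : σ (g * h) x = σ g (σ h x) := by
  rw [_root_.map_mul]; rfl

lemma sigma_one_apply (x : V) : σ (1 : Gp m) x = x := by rw [_root_.map_one]; rfl

lemma sigma_inv_cancel (g : Gp m) (x : V) : σ g⁻¹ (σ g x) = x := by
  rw [← sigma_mul_apply, inv_mul_cancel, sigma_one_apply]

lemma commute_all (T : Module.End ℂ V)
    (h : ∀ x : Gen, σ (PresentedGroup.of x) * T = T * σ (PresentedGroup.of x)) :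
    ∀ g : Gp m, σ g * T = T * σ g := by
  have key : ∀ g : Gp m, g ∈ (⟨⟨⟨{g | σ g * T = T * σ g}, by
      intro a b (ha : σ a * T = T * σ a) (hb : σ b * T = T * σ b)
      show σ (a * b) * T = T * σ (a * b)
      rw [_root_.map_mul, mul_assoc, hb, ← mul_assoc, ha, mul_assoc]⟩, by
      show σ (1 : Gp m) * T = T * σ 1
      rw [_root_.map_one, one_mul, mul_one]⟩, by
      intro a (ha : σ a * T = T * σ a)
      show σ a⁻¹ * T = T * σ a⁻¹
      have h1 : σ a⁻¹ * σ a = 1 := by rw [← _root_.map_mul, inv_mul_cancel, _root_.map_one]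
      have h2 : σ a * σ a⁻¹ = 1 := by rw [← _root_.map_mul, mul_inv_cancel, _root_.map_one]
      calc σ a⁻¹ * T = σ a⁻¹ * (T * (σ a * σ a⁻¹)) := by rw [h2, mul_one]
        _ = σ a⁻¹ * ((T * σ a) * σ a⁻¹) := by rw [mul_assoc]
        _ = σ a⁻¹ * ((σ a * T) * σ a⁻¹) := by rw [← ha]
        _ = (σ a⁻¹ * σ a) * (T * σ a⁻¹) := by rw [mul_assoc, mul_assoc]
        _ = T * σ a⁻¹ := by rw [h1, one_mul]⟩ : Subgroup (Gp m)) := by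
    intro g
    exact PresentedGroup.generated_by _ _ (fun j => h j) g
  exact key

lemma invariant_all (U : Submodule ℂ V)
    (h : ∀ x : Gen, ∀ w ∈ U, σ (PresentedGroup.of x) w ∈ U) :
    ∀ g : Gp m, ∀ w ∈ U, σ g w ∈ U := by
  have key : ∀ g : Gp m, g ∈ (⟨⟨⟨{g | (∀ w ∈ U, σ g w ∈ U) ∧ (∀ w ∈ U, σ g⁻¹ w ∈ U)}, by
      rintro a b ⟨ha1, ha2⟩ ⟨hb1, hb2⟩
      refine ⟨fun w hw => ?_, fun w hw => ?_⟩
      · rw [sigma_mul_apply]; exact ha1 _ (hb1 _ hw)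
      · rw [mul_inv_rev, sigma_mul_apply]; exact hb2 _ (ha2 _ hw)⟩, by
      refine ⟨fun w hw => ?_, fun w hw => ?_⟩
      · rw [sigma_one_apply]; exact hw
      · rw [inv_one, sigma_one_apply]; exact hw⟩, by
      rintro a ⟨ha1, ha2⟩
      exact ⟨ha2, by simpa using ha1⟩⟩ : Subgroup (Gp m)) := by
    intro g
    apply PresentedGroup.generated_by
    intro j
    refine ⟨h j, ?_⟩
    rw [gen_inv]
    exact h j
  exact fun g => (key g).1

lemma intertwine_all {d : ℕ} (ρ : Representation ℂ (Gp m) (Fin d → ℂ))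
    (e : (Fin d → ℂ) ≃ₗ[ℂ] V)
    (h : ∀ x : Gen, ∀ w, e (ρ (PresentedGroup.of x) w) = σ (PresentedGroup.of x) (e w)) :
    ∀ g : Gp m, ∀ w, e (ρ g w) = σ g (e w) := by
  have key : ∀ g : Gp m, g ∈ (⟨⟨⟨{g | ∀ w, e (ρ g w) = σ g (e w)}, by
      intro a b ha hb
      intro w
      rw [sigma_mul_apply, sigma_mul_apply, ← hb, ← ha]⟩, by
      intro w
      rw [sigma_one_apply, sigma_one_apply]⟩, by
      intro a ha w
      have : σ a (e (ρ a⁻¹ w)) = e w := by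
        rw [← ha, ← sigma_mul_apply ρ, mul_inv_cancel, sigma_one_apply]
      calc e (ρ a⁻¹ w) = σ a⁻¹ (σ a (e (ρ a⁻¹ w))) := (sigma_inv_cancel σ a _).symm
        _ = σ a⁻¹ (e w) := by rw [this]⟩ : Subgroup (Gp m)) := by
    intro g
    refine PresentedGroup.generated_by _ _ (fun j => ?_) g
    exact h j
  exact key

lemma pow_apply_smul (T : Module.End ℂ V) (v : V) (t : ℂ) (h : T v = t • v) :
    ∀ k : ℕ, (T ^ k) v = t ^ k • v := by
  intro k
  induction k with
  | zero => simp
  | succ n ih =>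
    rw [pow_succ, Module.End.mul_apply, h, map_smul, ih, smul_smul, pow_succ]
    ring_nf

lemma schur_pm (hirr : IsIrreducibleRep σ) (T : Module.End ℂ V)
    (hc : ∀ g : Gp m, σ g * T = T * σ g) (hT : T * T = 1) : T = 1 ∨ T = -1 := by
  set U := LinearMap.ker (T - 1) with hUdef
  have hUinv : ∀ g : Gp m, ∀ x ∈ U, σ g x ∈ U := by
    intro g x hx
    rw [hUdef, LinearMap.mem_ker] at hx ⊢
    have hTg : T (σ g x) = σ g (T x) := by
      have := congrFun (congrArg (fun f => f.toFun) (hc g)) x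
      simpa [Module.End.mul_apply] using this.symm
    rw [LinearMap.sub_apply, Module.End.one_apply, hTg]
    rw [LinearMap.sub_apply, Module.End.one_apply] at hx
    rw [sub_eq_zero] at hx
    rw [hx, sub_self]
  rcases hirr.2 U hUinv with hU | hU
  · right
    ext x
    have hfac : (T - 1) * (T + 1) = 0 := by
      simp only [sub_mul, mul_add, hT, one_mul, mul_one]
      abel
    have h2 : (T + 1) x ∈ U := by
      rw [hUdef, LinearMap.mem_ker]
      have := congrFun (congrArg (fun f => f.toFun) hfac) x
      simpa [Module.End.mul_apply] using this
    rw [hU] at h2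
    simp only [Submodule.mem_bot] at h2
    rw [LinearMap.add_apply, Module.End.one_apply, add_eq_zero_iff_eq_neg] at h2
    simp [h2]
  · left
    ext x
    have h2 : x ∈ U := by rw [hU]; trivial
    rw [hUdef, LinearMap.mem_ker, LinearMap.sub_apply, Module.End.one_apply, sub_eq_zero] at h2
    simp [h2]

end SigmaLemmas

end WAux

namespace WAux

noncomputable section Reps

/-- Monoid hom from matrices to endomorphisms. -/
def matEnd (n : ℕ) : Matrix (Fin n) (Fin n) ℂ →* Module.End ℂ (Fin n → ℂ) :=
  (Matrix.toLinAlgEquiv' : Matrix (Fin n) (Fin n) ℂ ≃ₐ[ℂ] Module.End ℂ (Fin n → ℂ)).toAlgHom.toMonoidHom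

lemma matEnd_apply (n : ℕ) (M : Matrix (Fin n) (Fin n) ℂ) : matEnd n M = Matrix.toLin' M := rfl

lemma trace_toLin' (n : ℕ) (M : Matrix (Fin n) (Fin n) ℂ) :
    LinearMap.trace ℂ (Fin n → ℂ) (Matrix.toLin' M) = M.trace := by
  rw [LinearMap.trace_eq_matrix_trace ℂ (Pi.basisFun ℂ (Fin n))]
  rw [LinearMap.toMatrix_eq_toMatrix', LinearMap.toMatrix'_toLin']

/-! ### One-dimensional representations -/

def sg (b : Bool) : ℂˣ := if b then 1 else -1

lemma sg_mul_self (b : Bool) : sg b * sg b = 1 := by cases b <;> simp [sg]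

lemma sg_val (b : Bool) : (sg b : ℂ) = 1 ∨ (sg b : ℂ) = -1 := by
  cases b <;> simp [sg]

lemma sg_val_mul_self (b : Bool) : (sg b : ℂ) * (sg b : ℂ) = 1 := by
  have := sg_mul_self b
  calc (sg b : ℂ) * (sg b : ℂ) = ((sg b * sg b : ℂˣ) : ℂ) := by rw [Units.val_mul]
    _ = 1 := by rw [this, Units.val_one]

def chiFun (b c : Bool) : Gen → ℂˣ
  | Gen.z => 1
  | Gen.s0 => sg c
  | Gen.s1 => sg b
  | Gen.sm => sg b

lemma chi_rels (m : ℕ) (b c : Bool) :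
    ∀ r ∈ relsOddPos m, FreeGroup.lift (chiFun b c) r = 1 := by
  intro r hr
  simp only [relsOddPos, Set.mem_insert_iff, Set.mem_singleton_iff] at hr
  rcases hr with rfl | rfl | rfl | rfl | rfl | rfl | rfl | rfl | rfl | rfl
  · rw [map_pow, FreeGroup.lift_apply_of]
    show (1 : ℂˣ) ^ 2 = 1; simp
  · rw [map_pow, FreeGroup.lift_apply_of]
    show sg c ^ 2 = 1; rw [sq, sg_mul_self]
  · rw [map_pow, FreeGroup.lift_apply_of]
    show sg b ^ 2 = 1; rw [sq, sg_mul_self]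
  · rw [map_pow, FreeGroup.lift_apply_of]
    show sg b ^ 2 = 1; rw [sq, sg_mul_self]
  · rw [map_pow, _root_.map_mul, FreeGroup.lift_apply_of, FreeGroup.lift_apply_of]
    show (sg b * sg b) ^ m = 1; rw [sg_mul_self, one_pow]
  · rw [_root_.map_mul, map_pow, _root_.map_mul, _root_.map_inv,
      FreeGroup.lift_apply_of, FreeGroup.lift_apply_of, FreeGroup.lift_apply_of]
    show (sg c * sg b) ^ 2 * (1 : ℂˣ)⁻¹ = 1
    rw [inv_one, mul_one, sq, mul_mul_mul_comm, sg_mul_self, sg_mul_self, one_mul]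
  · rw [_root_.map_mul, map_pow, _root_.map_mul, _root_.map_inv,
      FreeGroup.lift_apply_of, FreeGroup.lift_apply_of, FreeGroup.lift_apply_of]
    show (sg c * sg b) ^ 2 * (1 : ℂˣ)⁻¹ = 1
    rw [inv_one, mul_one, sq, mul_mul_mul_comm, sg_mul_self, sg_mul_self, one_mul]
  · simp only [_root_.map_mul, _root_.map_inv, FreeGroup.lift_apply_of]
    show (1 : ℂˣ) * sg c * 1⁻¹ * (sg c)⁻¹ = 1; group
  · simp only [_root_.map_mul, _root_.map_inv, FreeGroup.lift_apply_of]
    show (1 : ℂˣ) * sg b * 1⁻¹ * (sg b)⁻¹ = 1; group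
  · simp only [_root_.map_mul, _root_.map_inv, FreeGroup.lift_apply_of]
    show (1 : ℂˣ) * sg b * 1⁻¹ * (sg b)⁻¹ = 1; group

def chi (m : ℕ) (b c : Bool) : Gp m →* ℂˣ := PresentedGroup.toGroup (chi_rels m b c)

def rep1 (m : ℕ) (b c : Bool) : Representation ℂ (Gp m) (Fin 1 → ℂ) :=
  ((algebraMap ℂ (Module.End ℂ (Fin 1 → ℂ))).toMonoidHom.comp
    ((Units.coeHom ℂ).comp (chi m b c)))

lemma rep1_apply (m : ℕ) (b c : Bool) (g : Gp m) (x : Fin 1 → ℂ) :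
    rep1 m b c g x = ((chi m b c g : ℂˣ) : ℂ) • x := by
  show algebraMap ℂ (Module.End ℂ (Fin 1 → ℂ)) ((chi m b c g : ℂˣ) : ℂ) x = _
  rw [Module.algebraMap_end_apply]

lemma chi_of (m : ℕ) (b c : Bool) (x : Gen) :
    chi m b c (PresentedGroup.of x) = chiFun b c x :=
  PresentedGroup.toGroup.of _

lemma chi_gz (m : ℕ) (b c : Bool) : chi m b c gz = 1 := chi_of m b c Gen.z
lemma chi_g0 (m : ℕ) (b c : Bool) : chi m b c g0 = sg c := chi_of m b c Gen.s0
lemma chi_g1 (m : ℕ) (b c : Bool) : chi m b c g1 = sg b := chi_of m b c Gen.s1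
lemma chi_gm (m : ℕ) (b c : Bool) : chi m b c gm = sg b := chi_of m b c Gen.sm
lemma chi_gr (m : ℕ) (b c : Bool) : chi m b c gr = 1 := by
  rw [gr, _root_.map_mul, chi_g1, chi_gm, sg_mul_self]

lemma rep1_irr (m : ℕ) (b c : Bool) : IsIrreducibleRep (rep1 m b c) := by
  constructor
  · infer_instance
  · intro U _
    by_cases hbot : U = ⊥
    · left; exact hbot
    right
    obtain ⟨v, hvU, hv0⟩ := Submodule.exists_mem_ne_zero_of_ne_bot hbot
    have hv00 : v 0 ≠ 0 := by
      intro h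
      exact hv0 (funext fun i => by fin_cases i; simpa using h)
    rw [eq_top_iff]
    rintro w -
    have : w = (w 0 / v 0) • v := by
      funext i
      fin_cases i
      simp only [Pi.smul_apply, smul_eq_mul]
      field_simp
      rfl
    rw [this]
    exact U.smul_mem _ hvU

lemma rep1_trace (m : ℕ) (b c : Bool) (g : Gp m) :
    LinearMap.trace ℂ (Fin 1 → ℂ) (rep1 m b c g) = ((chi m b c g : ℂˣ) : ℂ) := by
  have : rep1 m b c g = Matrix.toLin' (((chi m b c g : ℂˣ) : ℂ) • (1 : Matrix (Fin 1) (Fin 1) ℂ)) := by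
    refine LinearMap.ext fun w => funext fun i => ?_
    rw [Matrix.toLin'_apply, rep1_apply]
    fin_cases i
    simp [Matrix.mulVec, dotProduct, Fin.sum_univ_succ, Matrix.one_apply]
  rw [this, trace_toLin']
  simp [Matrix.trace]

/-! ### Two-dimensional representations -/

def invGL (A : Matrix (Fin 2) (Fin 2) ℂ) (h : A * A = 1) : (Matrix (Fin 2) (Fin 2) ℂ)ˣ :=
  ⟨A, A, h, h⟩

lemma invGL_val (A : Matrix (Fin 2) (Fin 2) ℂ) (h : A * A = 1) : (invGL A h : Matrix (Fin 2) (Fin 2) ℂ) = A := rfl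

lemma invGL_inv (A : Matrix (Fin 2) (Fin 2) ℂ) (h : A * A = 1) : (invGL A h)⁻¹ = invGL A h := by
  rw [invGL, Units.inv_mk]


lemma diag_mul_diag (a b c d : ℂ) : !![a,0;0,b] * !![c,0;0,d] = !![a*c, 0; 0, b*d] := by
  ext i j; fin_cases i <;> fin_cases j <;> simp [Matrix.mul_apply, Fin.sum_univ_two]

lemma antidiag_mul_antidiag (a b c d : ℂ) : !![0,a;b,0] * !![0,c;d,0] = !![a*d, 0; 0, b*c] := by
  ext i j; fin_cases i <;> fin_cases j <;> simp [Matrix.mul_apply, Fin.sum_univ_two]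

lemma diag_mul_antidiag (a b c d : ℂ) : !![a,0;0,b] * !![0,c;d,0] = !![0, a*c; b*d, 0] := by
  ext i j; fin_cases i <;> fin_cases j <;> simp [Matrix.mul_apply, Fin.sum_univ_two]

lemma antidiag_mul_diag (a b c d : ℂ) : !![0,a;b,0] * !![c,0;0,d] = !![0, a*d; b*c, 0] := by
  ext i j; fin_cases i <;> fin_cases j <;> simp [Matrix.mul_apply, Fin.sum_univ_two]

lemma diag_eq_one {a b : ℂ} (ha : a = 1) (hb : b = 1) : !![a,0;0,b] = (1 : Matrix (Fin 2) (Fin 2) ℂ) := by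
  subst ha; subst hb
  ext i j; fin_cases i <;> fin_cases j <;> simp

variable {l u v : ℂ}


lemma M0_sq (hu : u * u = 1) (hv : v * v = 1) : !![u, 0; 0, v] * !![u, 0; 0, v] = 1 := by
  ext i j; fin_cases i <;> fin_cases j <;>
    simp [Matrix.mul_apply, Fin.sum_univ_two, hu, hv]

lemma M1_sq : !![(0:ℂ), 1; 1, 0] * !![(0:ℂ), 1; 1, 0] = 1 := by
  ext i j; fin_cases i <;> fin_cases j <;>
    simp [Matrix.mul_apply, Fin.sum_univ_two]

lemma Mm_sq (hl0 : l ≠ 0) : !![0, l⁻¹; l, 0] * !![0, l⁻¹; l, 0] = 1 := by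
  ext i j; fin_cases i <;> fin_cases j <;>
    simp [Matrix.mul_apply, Fin.sum_univ_two, inv_mul_cancel₀ hl0, mul_inv_cancel₀ hl0]

lemma Mz_smul : !![u*v, 0; 0, u*v] = (u*v) • (1 : Matrix (Fin 2) (Fin 2) ℂ) := by
  ext i j; fin_cases i <;> fin_cases j <;> simp

lemma Mz_sq (hu : u * u = 1) (hv : v * v = 1) :
    !![u*v, 0; 0, u*v] * !![u*v, 0; 0, u*v] = 1 := by
  have huv : (u*v) * (u*v) = 1 := by
    have : (u*v) * (u*v) = (u*u) * (v*v) := by ring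
    rw [this, hu, hv, one_mul]
  ext i j; fin_cases i <;> fin_cases j <;>
    simp [Matrix.mul_apply, Fin.sum_univ_two, huv]

def rep2Fun (l u v : ℂ) (hu : u * u = 1) (hv : v * v = 1) (hl0 : l ≠ 0) :
    Gen → (Matrix (Fin 2) (Fin 2) ℂ)ˣ
  | Gen.z => invGL !![u*v, 0; 0, u*v] (Mz_sq hu hv)
  | Gen.s0 => invGL !![u, 0; 0, v] (M0_sq hu hv)
  | Gen.s1 => invGL !![0, 1; 1, 0] M1_sq
  | Gen.sm => invGL !![0, l⁻¹; l, 0] (Mm_sq hl0)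

lemma zconj_helper (w : ℂ) (hw : w*w = 1) (A : Matrix (Fin 2) (Fin 2) ℂ) (hA : A*A = 1) :
    (w • 1 : Matrix (Fin 2) (Fin 2) ℂ) * A * (w • 1 : Matrix (Fin 2) (Fin 2) ℂ) * A = 1 := by
  simp only [smul_mul_assoc, mul_smul_comm, one_mul, mul_one, smul_smul]
  rw [hw, hA, one_smul]

lemma rep2_rels (m : ℕ) (hm : m ≠ 0) (l u v : ℂ) (hu : u * u = 1) (hv : v * v = 1)
    (hl : l ^ m = 1) :
    ∀ r ∈ relsOddPos m,
      FreeGroup.lift (rep2Fun l u v hu hv (fun h0 => by simp [h0, zero_pow hm] at hl)) r = 1 := by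
  have hl0 : l ≠ 0 := fun h0 => by simp [h0, zero_pow hm] at hl
  have huv : (u*v) * (u*v) = 1 := by
    have : (u*v) * (u*v) = (u*u) * (v*v) := by ring
    rw [this, hu, hv, one_mul]
  intro r hr
  simp only [relsOddPos, Set.mem_insert_iff, Set.mem_singleton_iff] at hr
  have hof : ∀ x : Gen, FreeGroup.lift (rep2Fun l u v hu hv hl0) (FreeGroup.of x)
      = rep2Fun l u v hu hv hl0 x := fun x => FreeGroup.lift_apply_of
  rcases hr with rfl | rfl | rfl | rfl | rfl | rfl | rfl | rfl | rfl | rfl <;>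
    apply Units.ext <;>
    simp only [map_pow, _root_.map_mul, _root_.map_inv, hof, rep2Fun, invGL_inv,
      Units.val_pow_eq_pow_val, Units.val_mul, invGL_val, Units.val_one]
  · rw [sq]; exact Mz_sq hu hv
  · rw [sq]; exact M0_sq hu hv
  · rw [sq]; exact M1_sq
  · rw [sq]; exact Mm_sq hl0
  · have h1 : !![(0:ℂ), 1; 1, 0] * !![0, l⁻¹; l, 0] = Matrix.diagonal ![l, l⁻¹] := by
      ext i j; fin_cases i <;> fin_cases j <;>
        simp [Matrix.mul_apply, Fin.sum_univ_two, Matrix.diagonal]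
    rw [h1, Matrix.diagonal_pow]
    have h2 : ![l, l⁻¹] ^ m = 1 := by
      funext i
      fin_cases i
      · show l ^ m = 1; exact hl
      · show (l⁻¹) ^ m = 1; rw [inv_pow, hl, inv_one]
    rw [h2]; exact Matrix.diagonal_one
  · rw [sq, diag_mul_antidiag, antidiag_mul_antidiag, diag_mul_diag]
    refine diag_eq_one ?_ ?_
    · have : u * 1 * (v * 1) * (u*v) = (u*u)*(v*v) := by ring
      rw [this, hu, hv, one_mul]
    · have : v * 1 * (u * 1) * (u*v) = (u*u)*(v*v) := by ring
      rw [this, hu, hv, one_mul]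
  · rw [sq, diag_mul_antidiag, antidiag_mul_antidiag, diag_mul_diag]
    refine diag_eq_one ?_ ?_
    · have : u * l⁻¹ * (v * l) * (u*v) = (u*u)*(v*v)*(l * l⁻¹) := by ring
      rw [this, hu, hv, mul_inv_cancel₀ hl0, one_mul, one_mul]
    · have : v * l * (u * l⁻¹) * (u*v) = (u*u)*(v*v)*(l * l⁻¹) := by ring
      rw [this, hu, hv, mul_inv_cancel₀ hl0, one_mul, one_mul]
  · rw [Mz_smul]
    exact zconj_helper (u*v) huv _ (M0_sq hu hv)
  · rw [Mz_smul]
    exact zconj_helper (u*v) huv _ M1_sq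
  · rw [Mz_smul]
    exact zconj_helper (u*v) huv _ (Mm_sq hl0)

end Reps

end WAux
namespace WAux

noncomputable section Rep2

lemma lne0 {m : ℕ} {l : ℂ} (hm : m ≠ 0) (hl : l ^ m = 1) : l ≠ 0 :=
  fun h0 => by simp [h0, zero_pow hm] at hl

variable (m : ℕ) (hm : m ≠ 0) (l u v : ℂ) (hu : u * u = 1) (hv : v * v = 1) (hl : l ^ m = 1)

def rep2 : Representation ℂ (Gp m) (Fin 2 → ℂ) :=
  (matEnd 2).comp ((Units.coeHom (Matrix (Fin 2) (Fin 2) ℂ)).comp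
    (PresentedGroup.toGroup (rep2_rels m hm l u v hu hv hl)))

lemma rep2_of (x : Gen) : rep2 m hm l u v hu hv hl (PresentedGroup.of x) =
    Matrix.toLin' ((rep2Fun l u v hu hv (lne0 hm hl) x : Matrix (Fin 2) (Fin 2) ℂ)) := by
  rw [rep2]
  simp only [MonoidHom.comp_apply, PresentedGroup.toGroup.of, Units.coeHom_apply, matEnd_apply]

lemma rep2_gz_mat : rep2 m hm l u v hu hv hl gz = Matrix.toLin' !![u*v, 0; 0, u*v] :=
  rep2_of m hm l u v hu hv hl Gen.z

lemma rep2_g0_mat : rep2 m hm l u v hu hv hl g0 = Matrix.toLin' !![u, 0; 0, v] :=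
  rep2_of m hm l u v hu hv hl Gen.s0

lemma rep2_g1_mat : rep2 m hm l u v hu hv hl g1 = Matrix.toLin' !![0, 1; 1, 0] :=
  rep2_of m hm l u v hu hv hl Gen.s1

lemma rep2_gm_mat : rep2 m hm l u v hu hv hl gm = Matrix.toLin' !![0, l⁻¹; l, 0] :=
  rep2_of m hm l u v hu hv hl Gen.sm

lemma rep2_mul_mat {a b : Gp m} {A B : Matrix (Fin 2) (Fin 2) ℂ}
    (hA : rep2 m hm l u v hu hv hl a = Matrix.toLin' A)
    (hB : rep2 m hm l u v hu hv hl b = Matrix.toLin' B) :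
    rep2 m hm l u v hu hv hl (a * b) = Matrix.toLin' (A * B) := by
  rw [_root_.map_mul, hA, hB, Matrix.toLin'_mul]
  rfl

lemma rep2_gr_mat : rep2 m hm l u v hu hv hl gr = Matrix.toLin' !![l, 0; 0, l⁻¹] := by
  have := rep2_mul_mat m hm l u v hu hv hl
    (rep2_g1_mat m hm l u v hu hv hl) (rep2_gm_mat m hm l u v hu hv hl)
  rw [gr, this, antidiag_mul_antidiag]
  norm_num

lemma rep2_g0gr_mat : rep2 m hm l u v hu hv hl (g0 * gr) = Matrix.toLin' !![u*l, 0; 0, v*l⁻¹] := by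
  have := rep2_mul_mat m hm l u v hu hv hl
    (rep2_g0_mat m hm l u v hu hv hl) (rep2_gr_mat m hm l u v hu hv hl)
  rw [this, diag_mul_diag]

lemma rep2_one_mat : rep2 m hm l u v hu hv hl 1 = Matrix.toLin' 1 := by
  rw [_root_.map_one, Matrix.toLin'_one]
  rfl

/-! vector values -/

lemma rep2_gz_apply (w : Fin 2 → ℂ) : rep2 m hm l u v hu hv hl gz w = (u*v) • w := by
  rw [rep2_gz_mat, Matrix.toLin'_apply]
  funext i; fin_cases i <;>
    simp [Matrix.mulVec, dotProduct, Fin.sum_univ_two]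

lemma rep2_g0_apply (w : Fin 2 → ℂ) :
    rep2 m hm l u v hu hv hl g0 w = ![u * w 0, v * w 1] := by
  rw [rep2_g0_mat, Matrix.toLin'_apply]
  funext i; fin_cases i <;>
    simp [Matrix.mulVec, dotProduct, Fin.sum_univ_two]

lemma rep2_g1_apply (w : Fin 2 → ℂ) :
    rep2 m hm l u v hu hv hl g1 w = ![w 1, w 0] := by
  rw [rep2_g1_mat, Matrix.toLin'_apply]
  funext i; fin_cases i <;>
    simp [Matrix.mulVec, dotProduct, Fin.sum_univ_two]

lemma rep2_gm_apply (w : Fin 2 → ℂ) :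
    rep2 m hm l u v hu hv hl gm w = ![l⁻¹ * w 1, l * w 0] := by
  rw [rep2_gm_mat, Matrix.toLin'_apply]
  funext i; fin_cases i <;>
    simp [Matrix.mulVec, dotProduct, Fin.sum_univ_two]

lemma rep2_gr_apply (w : Fin 2 → ℂ) :
    rep2 m hm l u v hu hv hl gr w = ![l * w 0, l⁻¹ * w 1] := by
  rw [rep2_gr_mat, Matrix.toLin'_apply]
  funext i; fin_cases i <;>
    simp [Matrix.mulVec, dotProduct, Fin.sum_univ_two]

/-! traces -/

lemma rep2_trace_one :
    LinearMap.trace ℂ (Fin 2 → ℂ) (rep2 m hm l u v hu hv hl 1) = 2 := by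
  rw [rep2_one_mat, trace_toLin', Matrix.trace_one]
  norm_num

lemma rep2_trace_gz :
    LinearMap.trace ℂ (Fin 2 → ℂ) (rep2 m hm l u v hu hv hl gz) = 2 * (u * v) := by
  rw [rep2_gz_mat, trace_toLin', Matrix.trace_fin_two]
  simp; ring

lemma rep2_trace_g0 :
    LinearMap.trace ℂ (Fin 2 → ℂ) (rep2 m hm l u v hu hv hl g0) = u + v := by
  rw [rep2_g0_mat, trace_toLin', Matrix.trace_fin_two]
  simp

lemma rep2_trace_gr :
    LinearMap.trace ℂ (Fin 2 → ℂ) (rep2 m hm l u v hu hv hl gr) = l + l⁻¹ := by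
  rw [rep2_gr_mat, trace_toLin', Matrix.trace_fin_two]
  simp

lemma rep2_trace_g0gr :
    LinearMap.trace ℂ (Fin 2 → ℂ) (rep2 m hm l u v hu hv hl (g0 * gr)) = u*l + v*l⁻¹ := by
  rw [rep2_g0gr_mat, trace_toLin', Matrix.trace_fin_two]
  simp

/-! irreducibility -/

lemma span_pair_top {a b : Fin 2 → ℂ} (h : a 0 * b 1 - a 1 * b 0 ≠ 0)
    {U : Submodule ℂ (Fin 2 → ℂ)} (ha : a ∈ U) (hb : b ∈ U) : U = ⊤ := by
  rw [eq_top_iff]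
  rintro w -
  have key : w = ((w 0 * b 1 - w 1 * b 0)/(a 0 * b 1 - a 1 * b 0)) • a
      + ((a 0 * w 1 - a 1 * w 0)/(a 0 * b 1 - a 1 * b 0)) • b := by
    funext i
    fin_cases i <;>
    · simp only [Pi.add_apply, Pi.smul_apply, smul_eq_mul, Fin.zero_eta, Fin.mk_one]
      have h' : b 1 * a 0 - b 0 * a 1 ≠ 0 := by rwa [mul_comm (b 1), mul_comm (b 0)]
      field_simp
      ring
  rw [key]
  exact U.add_mem (U.smul_mem _ ha) (U.smul_mem _ hb)

lemma minor_eq {U : Submodule ℂ (Fin 2 → ℂ)} (hne : U ≠ ⊤) {a b : Fin 2 → ℂ}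
    (ha : a ∈ U) (hb : b ∈ U) : a 0 * b 1 = a 1 * b 0 := by
  by_contra h
  exact hne (span_pair_top (sub_ne_zero.mpr h) ha hb)

lemma rep2_irr (hsep : u ≠ v ∨ l ≠ l⁻¹) : IsIrreducibleRep (rep2 m hm l u v hu hv hl) := by
  constructor
  · infer_instance
  · intro U hU
    by_cases hbot : U = ⊥
    · left; exact hbot
    right
    by_contra htop
    obtain ⟨w, hwU, hw0⟩ := Submodule.exists_mem_ne_zero_of_ne_bot hbot
    have h1w : rep2 m hm l u v hu hv hl g1 w ∈ U := hU g1 w hwU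
    have h0w : rep2 m hm l u v hu hv hl g0 w ∈ U := hU g0 w hwU
    have hmw : rep2 m hm l u v hu hv hl gm w ∈ U := hU gm w hwU
    rw [rep2_g1_apply] at h1w
    rw [rep2_g0_apply] at h0w
    rw [rep2_gm_apply] at hmw
    have m1 := minor_eq htop hwU h1w
    have m0 := minor_eq htop hwU h0w
    have mm := minor_eq htop hwU hmw
    simp only [Matrix.cons_val_zero, Matrix.cons_val_one, Matrix.head_cons] at m1 m0 mm
    -- m1 : w 0 * w 0 = w 1 * w 1
    -- m0 : w 0 * (v * w 1) = w 1 * (u * w 0)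
    -- mm : w 0 * (l * w 0) = w 1 * (l⁻¹ * w 1)
    have hx0 : w 0 ≠ 0 := by
      intro h0
      have h10 : w 1 = 0 := by
        have h : w 1 * w 1 = 0 := by rw [h0] at m1; simpa using m1.symm
        exact mul_self_eq_zero.mp h
      exact hw0 (funext fun i => by fin_cases i <;> simp [h0, h10])
    have hy0 : w 1 ≠ 0 := by
      intro h1
      rw [h1] at m1
      simp at m1
      exact hx0 m1
    rcases hsep with hne | hne
    · have hvu : v * (w 0 * w 1) = u * (w 0 * w 1) := by linear_combination m0
      exact hne (mul_right_cancel₀ (mul_ne_zero hx0 hy0) hvu).symm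
    · have h2 : l * (w 0 * w 0) = l⁻¹ * (w 0 * w 0) := by
        linear_combination mm - l⁻¹ * m1
      exact hne (mul_right_cancel₀ (mul_ne_zero hx0 hx0) h2)

end Rep2

end WAux
namespace WAux

noncomputable section Family

def transport {G : Type*} [Group G] {a b : ℕ} (h : a = b)
    (ρ : Representation ℂ G (Fin a → ℂ)) : Representation ℂ G (Fin b → ℂ) := h ▸ ρ

lemma transport_iso {G : Type*} [Group G] {a b : ℕ} (h : a = b)
    (ρ : Representation ℂ G (Fin a → ℂ)) : RepIso (transport h ρ) ρ := by
  subst h; exact repIso_refl ρ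

def cOf (t : Bool) : ℂ := if t then 1 else -1

lemma cOf_sq (t : Bool) : cOf t * cOf t = 1 := by cases t <;> norm_num [cOf]

lemma cOf_inj {t t' : Bool} (h : cOf t = cOf t') : t = t' := by
  cases t <;> cases t' <;> first | rfl | (exfalso; norm_num [cOf] at h)

lemma sg_eq_cOf (t : Bool) : ((sg t : ℂˣ) : ℂ) = cOf t := by cases t <;> simp [sg, cOf]

def zeta (m : ℕ) : ℂ := Complex.exp (2 * Real.pi * Complex.I / m)

lemma zeta_prim {m : ℕ} (hm : m ≠ 0) : IsPrimitiveRoot (zeta m) m :=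
  Complex.isPrimitiveRoot_exp m hm

lemma zeta_pow {m : ℕ} (hm : m ≠ 0) (k : ℕ) : (zeta m ^ k) ^ m = 1 := by
  rw [← pow_mul, mul_comm, pow_mul, (zeta_prim hm).pow_eq_one, one_pow]

lemma zeta_pow_ne_zero {m : ℕ} (hm : m ≠ 0) (k : ℕ) : zeta m ^ k ≠ 0 :=
  lne0 hm (zeta_pow hm k)

/-- separation: for `1 ≤ 2k < m`, `ζ^k ≠ (ζ^k)⁻¹`. -/
lemma zeta_ne_inv {m : ℕ} (hm : m ≠ 0) {k : ℕ} (hk : 1 ≤ k) (h2k : 2 * k < m) :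
    zeta m ^ k ≠ (zeta m ^ k)⁻¹ := by
  intro h
  have h1 : zeta m ^ k * zeta m ^ k = 1 := by
    nth_rewrite 1 [h]
    exact inv_mul_cancel₀ (zeta_pow_ne_zero hm k)
  rw [← pow_add] at h1
  have := ((zeta_prim hm).pow_eq_one_iff_dvd _).mp h1
  have := Nat.le_of_dvd (by omega) this
  omega

/-- injectivity of `x ↦ x + x⁻¹` on suitable powers of `ζ`. -/
lemma zeta_sum_inv_inj {m : ℕ} (hm : m ≠ 0) {a b : ℕ} (ha : a < m) (hb : b < m)
    (hab : 0 < a + b) (hab2 : a + b < m)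
    (h : zeta m ^ a + (zeta m ^ a)⁻¹ = zeta m ^ b + (zeta m ^ b)⁻¹) : a = b := by
  set x := zeta m ^ a with hx
  set y := zeta m ^ b with hy
  have hx0 : x ≠ 0 := zeta_pow_ne_zero hm a
  have hy0 : y ≠ 0 := zeta_pow_ne_zero hm b
  have key : (x - y) * (x * y - 1) = x * y * ((x + x⁻¹) - (y + y⁻¹)) := by
    field_simp
    ring
  rw [h, sub_self, mul_zero] at key
  rcases mul_eq_zero.mp key with h1 | h1
  · exact (zeta_prim hm).pow_inj ha hb (sub_eq_zero.mp h1)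
  · exfalso
    have hxy : zeta m ^ (a + b) = 1 := by rw [pow_add, ← hx, ← hy]; rw [sub_eq_zero] at h1; exact h1
    have := ((zeta_prim hm).pow_eq_one_iff_dvd _).mp hxy
    have := Nat.le_of_dvd hab this
    omega

variable (m : ℕ) (hm : m ≠ 0)

def dd : ℕ → ℕ := fun i => if i < 4 then 1 else 2

lemma dd_lt {i : ℕ} (h : i < 4) : dd i = 1 := if_pos h
lemma dd_ge {i : ℕ} (h : ¬ i < 4) : dd i = 2 := if_neg h

/-- the exponent used in class 1 -/
def kk1 (m i : ℕ) : ℕ := (i - 4) % ((m - 1) / 2) + 1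
/-- the Bool sign used in class 1 -/
def bb1 (m i : ℕ) : Bool := decide (i - 4 < (m - 1) / 2)
/-- the exponent used in class 2 -/
def kk2 (m i : ℕ) : ℕ := i - (m + 3)

def rhoAux (i : ℕ) : Representation ℂ (Gp m) (Fin (dd i) → ℂ) :=
  if h : i < 4 then
    transport (dd_lt h).symm (rep1 m (decide (i % 2 = 0)) (decide (i / 2 = 0)))
  else if h2 : i < m + 3 then
    transport (dd_ge h).symm
      (rep2 m hm (zeta m ^ kk1 m i) (cOf (bb1 m i)) (cOf (bb1 m i))
        (cOf_sq _) (cOf_sq _) (zeta_pow hm _))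
  else
    transport (dd_ge h).symm
      (rep2 m hm (zeta m ^ kk2 m i) 1 (-1) (by norm_num) (by norm_num) (zeta_pow hm _))

lemma rhoAux_lt {i : ℕ} (h : i < 4) :
    rhoAux m hm i = transport (dd_lt h).symm (rep1 m (decide (i % 2 = 0)) (decide (i / 2 = 0))) :=
  dif_pos h

lemma rhoAux_mid {i : ℕ} (h : ¬ i < 4) (h2 : i < m + 3) :
    rhoAux m hm i = transport (dd_ge h).symm
      (rep2 m hm (zeta m ^ kk1 m i) (cOf (bb1 m i)) (cOf (bb1 m i))
        (cOf_sq _) (cOf_sq _) (zeta_pow hm _)) := by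
  rw [rhoAux, dif_neg h, dif_pos h2]

lemma rhoAux_hi {i : ℕ} (h : ¬ i < 4) (h2 : ¬ i < m + 3) :
    rhoAux m hm i = transport (dd_ge h).symm
      (rep2 m hm (zeta m ^ kk2 m i) 1 (-1) (by norm_num) (by norm_num) (zeta_pow hm _)) := by
  rw [rhoAux, dif_neg h, dif_neg h2]

end Family

end WAux
namespace WAux

noncomputable section NonIso

variable {m : ℕ} (hm : m ≠ 0)

lemma tr0_one {i : ℕ} (h : i < 4) :
    LinearMap.trace ℂ _ (rhoAux m hm i 1) = 1 := by
  rw [rhoAux_lt m hm h, repIso_trace (transport_iso _ _) 1, rep1_trace, _root_.map_one,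
    Units.val_one]

lemma tr0_g0 {i : ℕ} (h : i < 4) :
    LinearMap.trace ℂ _ (rhoAux m hm i g0) = cOf (decide (i / 2 = 0)) := by
  rw [rhoAux_lt m hm h, repIso_trace (transport_iso _ _) g0, rep1_trace, chi_g0, sg_eq_cOf]

lemma tr0_g1 {i : ℕ} (h : i < 4) :
    LinearMap.trace ℂ _ (rhoAux m hm i g1) = cOf (decide (i % 2 = 0)) := by
  rw [rhoAux_lt m hm h, repIso_trace (transport_iso _ _) g1, rep1_trace, chi_g1, sg_eq_cOf]

lemma tr1_one {i : ℕ} (h : ¬ i < 4) (h2 : i < m + 3) :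
    LinearMap.trace ℂ _ (rhoAux m hm i 1) = 2 := by
  rw [rhoAux_mid m hm h h2, repIso_trace (transport_iso _ _) 1, rep2_trace_one]

lemma tr1_gz {i : ℕ} (h : ¬ i < 4) (h2 : i < m + 3) :
    LinearMap.trace ℂ _ (rhoAux m hm i gz) = 2 := by
  rw [rhoAux_mid m hm h h2, repIso_trace (transport_iso _ _) gz, rep2_trace_gz, cOf_sq, mul_one]

lemma tr1_g0 {i : ℕ} (h : ¬ i < 4) (h2 : i < m + 3) :
    LinearMap.trace ℂ _ (rhoAux m hm i g0) = cOf (bb1 m i) + cOf (bb1 m i) := by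
  rw [rhoAux_mid m hm h h2, repIso_trace (transport_iso _ _) g0, rep2_trace_g0]

lemma tr1_gr {i : ℕ} (h : ¬ i < 4) (h2 : i < m + 3) :
    LinearMap.trace ℂ _ (rhoAux m hm i gr) = zeta m ^ kk1 m i + (zeta m ^ kk1 m i)⁻¹ := by
  rw [rhoAux_mid m hm h h2, repIso_trace (transport_iso _ _) gr, rep2_trace_gr]

lemma tr2_one {i : ℕ} (h : ¬ i < 4) (h2 : ¬ i < m + 3) :
    LinearMap.trace ℂ _ (rhoAux m hm i 1) = 2 := by
  rw [rhoAux_hi m hm h h2, repIso_trace (transport_iso _ _) 1, rep2_trace_one]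

lemma tr2_gz {i : ℕ} (h : ¬ i < 4) (h2 : ¬ i < m + 3) :
    LinearMap.trace ℂ _ (rhoAux m hm i gz) = -2 := by
  rw [rhoAux_hi m hm h h2, repIso_trace (transport_iso _ _) gz, rep2_trace_gz]
  norm_num

lemma tr2_gr {i : ℕ} (h : ¬ i < 4) (h2 : ¬ i < m + 3) :
    LinearMap.trace ℂ _ (rhoAux m hm i gr) = zeta m ^ kk2 m i + (zeta m ^ kk2 m i)⁻¹ := by
  rw [rhoAux_hi m hm h h2, repIso_trace (transport_iso _ _) gr, rep2_trace_gr]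

lemma tr2_g0gr {i : ℕ} (h : ¬ i < 4) (h2 : ¬ i < m + 3) :
    LinearMap.trace ℂ _ (rhoAux m hm i (g0 * gr)) =
      zeta m ^ kk2 m i - (zeta m ^ kk2 m i)⁻¹ := by
  rw [rhoAux_hi m hm h h2, repIso_trace (transport_iso _ _) (g0 * gr), rep2_trace_g0gr]
  ring

lemma mod_split {p a b : ℕ} (ha : a < 2*p) (hb : b < 2*p)
    (h1 : a % p = b % p) (h2 : a < p ↔ b < p) : a = b := by
  by_cases hap : a < p
  · have hbp : b < p := h2.mp hap
    rwa [Nat.mod_eq_of_lt hap, Nat.mod_eq_of_lt hbp] at h1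
  · have hbp : ¬ b < p := fun hb' => hap (h2.mpr hb')
    have ha' : a - p < p := by omega
    have hb' : b - p < p := by omega
    rw [Nat.mod_eq_sub_mod (by omega), Nat.mod_eq_of_lt ha'] at h1
    rw [Nat.mod_eq_sub_mod (by omega), Nat.mod_eq_of_lt hb'] at h1
    omega

lemma kk1_lt (hm3 : 3 ≤ m) {i : ℕ} : kk1 m i ≤ (m-1)/2 := by
  have hp : 0 < (m-1)/2 := by omega
  have := Nat.mod_lt (i - 4) hp
  unfold kk1
  omega

lemma rho_noniso (hm3 : 3 ≤ m) (hodd : Odd m) {i j : ℕ} (hi : i < 2*m+3) (hj : j < 2*m+3)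
    (hne : i ≠ j) (hiso : RepIso (rhoAux m hm i) (rhoAux m hm j)) : False := by
  obtain ⟨p, hp⟩ := hodd
  have hp2 : (m-1)/2 = p := by omega
  have htr := fun g => repIso_trace hiso g
  by_cases hi4 : i < 4 <;> by_cases hj4 : j < 4
  · have e0 := htr g0
    rw [tr0_g0 hm hi4, tr0_g0 hm hj4] at e0
    have e1 := htr g1
    rw [tr0_g1 hm hi4, tr0_g1 hm hj4] at e1
    have b0 := cOf_inj e0
    have b1 := cOf_inj e1
    rw [decide_eq_decide] at b0 b1
    omega
  · have e := htr 1
    rw [tr0_one hm hi4] at e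
    by_cases hj3 : j < m+3
    · rw [tr1_one hm hj4 hj3] at e; norm_num at e
    · rw [tr2_one hm hj4 hj3] at e; norm_num at e
  · have e := htr 1
    rw [tr0_one hm hj4] at e
    by_cases hi3 : i < m+3
    · rw [tr1_one hm hi4 hi3] at e; norm_num at e
    · rw [tr2_one hm hi4 hi3] at e; norm_num at e
  · by_cases hi3 : i < m+3 <;> by_cases hj3 : j < m+3
    · -- both class 1
      have e0 := htr g0
      rw [tr1_g0 hm hi4 hi3, tr1_g0 hm hj4 hj3] at e0
      have hbb : bb1 m i = bb1 m j := cOf_inj (by linear_combination e0 / 2)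
      have er := htr gr
      rw [tr1_gr hm hi4 hi3, tr1_gr hm hj4 hj3] at er
      have hk1i := kk1_lt (m := m) hm3 (i := i)
      have hk1j := kk1_lt (m := m) hm3 (i := j)
      have hk : kk1 m i = kk1 m j := by
        refine zeta_sum_inv_inj hm (by omega) (by omega) (by unfold kk1; omega) (by omega) er
      unfold kk1 at hk
      unfold bb1 at hbb
      rw [decide_eq_decide] at hbb
      rw [hp2] at hk hbb
      have : i - 4 = j - 4 := mod_split (by omega) (by omega) (by omega) hbb
      omega
    · have e := htr gz
      rw [tr1_gz hm hi4 hi3, tr2_gz hm hj4 hj3] at e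
      norm_num at e
    · have e := htr gz
      rw [tr2_gz hm hi4 hi3, tr1_gz hm hj4 hj3] at e
      norm_num at e
    · have er := htr gr
      rw [tr2_gr hm hi4 hi3, tr2_gr hm hj4 hj3] at er
      have e2 := htr (g0 * gr)
      rw [tr2_g0gr hm hi4 hi3, tr2_g0gr hm hj4 hj3] at e2
      have hxy : zeta m ^ kk2 m i = zeta m ^ kk2 m j := by linear_combination (er + e2) / 2
      have := (zeta_prim hm).pow_inj (i := kk2 m i) (j := kk2 m j)
        (by unfold kk2; omega) (by unfold kk2; omega) hxy
      unfold kk2 at this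
      omega

lemma rhoAux_irr (hm3 : 3 ≤ m) (hodd : Odd m) (i : ℕ) :
    IsIrreducibleRep (rhoAux m hm i) := by
  obtain ⟨p, hp⟩ := hodd
  by_cases hi4 : i < 4
  · rw [rhoAux_lt m hm hi4]
    exact repIso_irr (repIso_symm (transport_iso _ _)) (rep1_irr _ _ _)
  · by_cases hi3 : i < m + 3
    · rw [rhoAux_mid m hm hi4 hi3]
      refine repIso_irr (repIso_symm (transport_iso _ _)) (rep2_irr _ _ _ _ _ _ _ _ ?_)
      right
      have h1 : 1 ≤ kk1 m i := by unfold kk1; omega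
      have h2 := kk1_lt (m := m) hm3 (i := i)
      exact zeta_ne_inv hm h1 (by omega)
    · rw [rhoAux_hi m hm hi4 hi3]
      refine repIso_irr (repIso_symm (transport_iso _ _)) (rep2_irr _ _ _ _ _ _ _ _ ?_)
      left
      norm_num

end NonIso

end WAux
namespace WAux

noncomputable section Complete1

variable {m : ℕ} {V : Type*} [AddCommGroup V] [Module ℂ V]
  (σ : Representation ℂ (Gp m) V)

lemma invol_apply {g : Gp m} (hrel : g ^ 2 = 1) (x : V) : σ g (σ g x) = x := by
  rw [← sigma_mul_apply, ← sq, hrel, sigma_one_apply]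

lemma eig_inv (g : Gp m) (t : ℂ) (ht : t ≠ 0) (x : V) (h : σ g x = t • x) :
    σ g⁻¹ x = t⁻¹ • x := by
  have h1 : σ g⁻¹ (σ g x) = x := sigma_inv_cancel σ g x
  rw [h, map_smul] at h1
  calc σ g⁻¹ x = t⁻¹ • (t • σ g⁻¹ x) := by rw [smul_smul, inv_mul_cancel₀ ht, one_smul]
    _ = t⁻¹ • x := by rw [h1]

lemma indep_of_not_dep {w : V} (hw : w ≠ 0) (h : ¬ ∃ t : ℂ, σ g1 w = t • w) :
    LinearIndependent ℂ ![w, σ g1 w] := by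
  rw [LinearIndependent.pair_iff]
  intro s t hst
  by_cases ht : t = 0
  · subst ht
    simp only [zero_smul, add_zero, smul_eq_zero] at hst
    rcases hst with hs | hs
    · exact ⟨hs, rfl⟩
    · exact absurd hs hw
  · exfalso
    apply h
    refine ⟨-(s * t⁻¹), ?_⟩
    have : σ g1 w = (-(s/t)) • w := by
      have : t • σ g1 w = -(s • w) := by
        rw [eq_neg_iff_add_eq_zero, add_comm]
        exact hst
      calc σ g1 w = t⁻¹ • (t • σ g1 w) := by rw [smul_smul, inv_mul_cancel₀ ht, one_smul]
        _ = t⁻¹ • (-(s • w)) := by rw [this]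
        _ = (-(s/t)) • w := by
              rw [smul_neg, smul_smul, ← neg_smul]
              congr 1
              ring
    rw [this]
    rw [div_eq_mul_inv]

/-- The workhorse: given a vector `w` generating an eigenbasis pattern, build the
isomorphism with the 2-dimensional matrix representation. -/
lemma build_iso2 (hm : m ≠ 0) (l u v' : ℂ) (hu : u * u = 1) (hv : v' * v' = 1)
    (hl : l ^ m = 1)
    (hirr : IsIrreducibleRep σ)
    (w : V) (hw : w ≠ 0)
    (hA : σ gr w = l • w)
    (hC : σ g0 w = u • w)
    (hCB : σ g0 (σ g1 w) = v' • σ g1 w)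
    (hZv : ∀ x : V, σ gz x = (u * v') • x)
    (hnod : ¬ ∃ t : ℂ, σ g1 w = t • w) :
    RepIso (rep2 m hm l u v' hu hv hl) σ ∧ Module.finrank ℂ V = 2 := by
  have hl0 : l ≠ 0 := lne0 hm hl
  have hBB : ∀ x : V, σ g1 (σ g1 x) = x := invol_apply σ rel1
  have hMw : σ gm w = l • σ g1 w := by
    rw [gm_eq, sigma_mul_apply, hA, map_smul]
  have hMBw : σ gm (σ g1 w) = l⁻¹ • w := by
    rw [← sigma_mul_apply, gm_g1]
    exact eig_inv σ gr l hl0 w hA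
  -- span is everything
  have hspan : Submodule.span ℂ {w, σ g1 w} = ⊤ := by
    set U := Submodule.span ℂ {w, σ g1 w} with hU
    have hwU : w ∈ U := Submodule.subset_span (Set.mem_insert _ _)
    have hBwU : σ g1 w ∈ U := Submodule.subset_span (Set.mem_insert_of_mem _ rfl)
    have hgen : ∀ x : Gen, ∀ y ∈ U, σ (PresentedGroup.of x) y ∈ U := by
      intro x
      have hsub : ∀ y ∈ ({w, σ g1 w} : Set V), σ (PresentedGroup.of x) y ∈ U := by
        rintro y (rfl | rfl)
        · cases x
          · rw [show (PresentedGroup.of Gen.z : Gp m) = gz from rfl, hZv]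
            exact U.smul_mem _ hwU
          · rw [show (PresentedGroup.of Gen.s0 : Gp m) = g0 from rfl, hC]
            exact U.smul_mem _ hwU
          · exact hBwU
          · rw [show (PresentedGroup.of Gen.sm : Gp m) = gm from rfl, hMw]
            exact U.smul_mem _ hBwU
        · cases x
          · rw [show (PresentedGroup.of Gen.z : Gp m) = gz from rfl, hZv]
            exact U.smul_mem _ hBwU
          · rw [show (PresentedGroup.of Gen.s0 : Gp m) = g0 from rfl, hCB]
            exact U.smul_mem _ hBwU
          · rw [show (PresentedGroup.of Gen.s1 : Gp m) = g1 from rfl, hBB]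
            exact hwU
          · rw [show (PresentedGroup.of Gen.sm : Gp m) = gm from rfl, hMBw]
            exact U.smul_mem _ hwU
      intro y hy
      refine Submodule.span_induction ?_ ?_ ?_ ?_ hy
      · exact hsub
      · simp
      · intro a b _ _ ha hb
        rw [map_add]; exact U.add_mem ha hb
      · intro t a _ ha
        rw [map_smul]; exact U.smul_mem t ha
    have hUinv := invariant_all σ U hgen
    rcases hirr.2 U hUinv with hbot | htop
    · exfalso
      rw [hbot] at hwU
      exact hw (Submodule.mem_bot ℂ |>.mp hwU)
    · exact htop
  have hli : LinearIndependent ℂ ![w, σ g1 w] := indep_of_not_dep σ hw hnod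
  have hrange : Set.range ![w, σ g1 w] = {w, σ g1 w} := by
    ext y
    simp only [Matrix.range_cons, Matrix.range_empty, Set.union_empty, Set.union_singleton,
      Set.mem_insert_iff, Set.mem_singleton_iff]
    tauto
  have hsp : ⊤ ≤ Submodule.span ℂ (Set.range ![w, σ g1 w]) := by
    rw [hrange, hspan]
  let bs : Module.Basis (Fin 2) ℂ V := Module.Basis.mk hli hsp
  have hbs0 : bs 0 = w := by rw [Module.Basis.mk_apply]; rfl
  have hbs1 : bs 1 = σ g1 w := by rw [Module.Basis.mk_apply]; rfl
  let e : (Fin 2 → ℂ) ≃ₗ[ℂ] V := bs.equivFun.symm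
  have he : ∀ xv : Fin 2 → ℂ, e xv = xv 0 • w + xv 1 • σ g1 w := by
    intro xv
    show bs.equivFun.symm xv = _
    rw [Module.Basis.equivFun_symm_apply, Fin.sum_univ_two, hbs0, hbs1]
  constructor
  · refine ⟨e, intertwine_all σ (rep2 m hm l u v' hu hv hl) e ?_⟩
    intro x xv
    cases x
    · rw [show (PresentedGroup.of Gen.z : Gp m) = gz from rfl, rep2_gz_apply, hZv, map_smul]
    · rw [show (PresentedGroup.of Gen.s0 : Gp m) = g0 from rfl, rep2_g0_apply,
        he, he, map_add, map_smul, map_smul, hC, hCB]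
      simp only [Matrix.cons_val_zero, Matrix.cons_val_one, Matrix.head_cons]
      module
    · rw [show (PresentedGroup.of Gen.s1 : Gp m) = g1 from rfl, rep2_g1_apply,
        he, he, map_add, map_smul, map_smul, hBB]
      simp only [Matrix.cons_val_zero, Matrix.cons_val_one, Matrix.head_cons]
      module
    · rw [show (PresentedGroup.of Gen.sm : Gp m) = gm from rfl, rep2_gm_apply,
        he, he, map_add, map_smul, map_smul, hMw, hMBw]
      simp only [Matrix.cons_val_zero, Matrix.cons_val_one, Matrix.head_cons]
      module
  · rw [Module.finrank_eq_card_basis bs]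
    simp

end Complete1

end WAux
namespace WAux

noncomputable section Complete2

lemma op_comm {R : Type*} [Ring R] (X Y : R) (hX : X*X = 1) (hY : Y*Y = 1)
    (hXY : (X*Y)*(X*Y) = 1) : X*Y = Y*X := by
  have h2 : X*Y*X = Y := by
    calc X*Y*X = X*Y*X*(Y*Y) := by rw [hY, mul_one]
      _ = (X*Y)*(X*Y)*Y := by simp only [mul_assoc]
      _ = Y := by rw [hXY, one_mul]
  calc X*Y = X*Y*(X*X) := by rw [hX, mul_one]
    _ = (X*Y*X)*X := by simp only [mul_assoc]
    _ = Y*X := by rw [h2]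

lemma op_anticomm {R : Type*} [Ring R] (X Y : R) (hX : X*X = 1) (hY : Y*Y = 1)
    (hXY : (X*Y)*(X*Y) = -1) : X*Y = -(Y*X) := by
  have h2 : X*Y*X = -Y := by
    calc X*Y*X = X*Y*X*(Y*Y) := by rw [hY, mul_one]
      _ = (X*Y)*(X*Y)*Y := by simp only [mul_assoc]
      _ = -Y := by rw [hXY, neg_one_mul]
  calc X*Y = X*Y*(X*X) := by rw [hX, mul_one]
    _ = (X*Y*X)*X := by simp only [mul_assoc]
    _ = -(Y*X) := by rw [h2, neg_mul]

lemma zeta_pow_inv {m : ℕ} (hm : m ≠ 0) {k : ℕ} (hk : k ≤ m) :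
    (zeta m ^ k)⁻¹ = zeta m ^ (m - k) := by
  refine inv_eq_of_mul_eq_one_right ?_
  rw [← pow_add]
  have : k + (m - k) = m := by omega
  rw [this, (zeta_prim hm).pow_eq_one]

variable {m : ℕ} {V : Type*} [AddCommGroup V] [Module ℂ V]
  (σ : Representation ℂ (Gp m) V)

lemma inv_span_singleton (f : V →ₗ[ℂ] V) (w : V)
    (h : f w ∈ Submodule.span ℂ {w}) :
    ∀ y ∈ Submodule.span ℂ {w}, f y ∈ Submodule.span ℂ {w} := by
  intro y hy
  obtain ⟨a, rfl⟩ := Submodule.mem_span_singleton.mp hy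
  rw [map_smul]
  exact Submodule.smul_mem _ a h

lemma build_iso1 (tb cb : Bool) (w : V) (hw : w ≠ 0)
    (hB : σ g1 w = cOf tb • w)
    (hC : σ g0 w = cOf cb • w)
    (hZ1 : ∀ x : V, σ gz x = x)
    (hA1 : σ gr w = w)
    (hspan : Submodule.span ℂ {w} = ⊤) :
    RepIso (rep1 m tb cb) σ ∧ Module.finrank ℂ V = 1 := by
  have hMv : σ gm w = cOf tb • w := by
    rw [gm_eq, sigma_mul_apply, hA1, hB]
  have φdef : ∀ xv : Fin 1 → ℂ,
      ((LinearMap.toSpanSingleton ℂ V w).comp (LinearMap.proj 0)) xv = xv 0 • w := by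
    intro xv; rfl
  have hinj : Function.Injective ((LinearMap.toSpanSingleton ℂ V w).comp
      (LinearMap.proj (R := ℂ) (φ := fun _ : Fin 1 => ℂ) 0)) := by
    intro a b hab
    rw [φdef, φdef] at hab
    have : (a 0 - b 0) • w = 0 := by rw [sub_smul, hab, sub_self]
    rcases smul_eq_zero.mp this with h | h
    · funext i
      fin_cases i
      exact sub_eq_zero.mp h
    · exact absurd h hw
  have hsurj : Function.Surjective ((LinearMap.toSpanSingleton ℂ V w).comp
      (LinearMap.proj (R := ℂ) (φ := fun _ : Fin 1 => ℂ) 0)) := by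
    intro x
    have : x ∈ Submodule.span ℂ {w} := by rw [hspan]; trivial
    obtain ⟨a, rfl⟩ := Submodule.mem_span_singleton.mp this
    exact ⟨![a], by rw [φdef]; simp⟩
  let e : (Fin 1 → ℂ) ≃ₗ[ℂ] V := LinearEquiv.ofBijective _ ⟨hinj, hsurj⟩
  have he : ∀ xv : Fin 1 → ℂ, e xv = xv 0 • w := fun xv => φdef xv
  constructor
  · refine ⟨e, intertwine_all σ (rep1 m tb cb) e ?_⟩
    intro x xv
    rw [rep1_apply, map_smul, he]
    cases x
    · rw [show (PresentedGroup.of Gen.z : Gp m) = gz from rfl, chi_gz,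
        show ((1 : ℂˣ) : ℂ) = 1 from rfl, one_smul, hZ1]
    · rw [show (PresentedGroup.of Gen.s0 : Gp m) = g0 from rfl, chi_g0, sg_eq_cOf,
        map_smul, hC, smul_comm]
    · rw [show (PresentedGroup.of Gen.s1 : Gp m) = g1 from rfl, chi_g1, sg_eq_cOf,
        map_smul, hB, smul_comm]
    · rw [show (PresentedGroup.of Gen.sm : Gp m) = gm from rfl, chi_gm, sg_eq_cOf,
        map_smul, hMv, smul_comm]
  · rw [← finrank_span_singleton (K := ℂ) hw, hspan, finrank_top]

end Complete2

end WAux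
namespace WAux

noncomputable section Master

variable {m : ℕ} {V : Type*} [AddCommGroup V] [Module ℂ V]
  (σ : Representation ℂ (Gp m) V)

lemma smul_cancel {x : V} (hx : x ≠ 0) {a b : ℂ} (h : a • x = b • x) : a = b := by
  have h2 : (a - b) • x = 0 := by rw [sub_smul, h, sub_self]
  rcases smul_eq_zero.mp h2 with h3 | h3
  · exact sub_eq_zero.mp h3
  · exact absurd h3 hx

lemma eig_B {t : ℂ} (ht : t ≠ 0) (x : V) (h : σ gr x = t • x) :
    σ gr (σ g1 x) = t⁻¹ • σ g1 x := by
  rw [← sigma_mul_apply, conj1r, sigma_mul_apply, eig_inv σ gr t ht x h, map_smul]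

lemma complete (hm3 : 3 ≤ m) (hodd : Odd m) (hm : m ≠ 0)
    [FiniteDimensional ℂ V] (hirr : IsIrreducibleRep σ) :
    (Module.finrank ℂ V = 1 ∨ Module.finrank ℂ V = 2) ∧
      ∃ i : ℕ, i < 2*m+3 ∧ RepIso (rhoAux m hm i) σ := by
  obtain ⟨p, hp⟩ := hodd
  haveI : Nontrivial V := hirr.1
  haveI : NeZero m := ⟨hm⟩
  have hZZ : σ gz * σ gz = 1 := by rw [← _root_.map_mul, ← sq, relz, _root_.map_one]
  have hCC : σ g0 * σ g0 = 1 := by rw [← _root_.map_mul, ← sq, rel0, _root_.map_one]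
  have hBBop : σ g1 * σ g1 = 1 := by rw [← _root_.map_mul, ← sq, rel1, _root_.map_one]
  have hMMop : σ gm * σ gm = 1 := by rw [← _root_.map_mul, ← sq, relm, _root_.map_one]
  have h01 : (σ g0 * σ g1) * (σ g0 * σ g1) = σ gz := by
    rw [← _root_.map_mul, ← _root_.map_mul, ← sq, rel01]
  have h0m : (σ g0 * σ gm) * (σ g0 * σ gm) = σ gz := by
    rw [← _root_.map_mul, ← _root_.map_mul, ← sq, rel0m]
  have hZcomm : ∀ g : Gp m, σ g * σ gz = σ gz * σ g := fun g => by
    rw [← _root_.map_mul, ← z_central, _root_.map_mul]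
  have hZsc := schur_pm σ hirr (σ gz) hZcomm hZZ
  -- eigenvector of A = σ gr
  obtain ⟨lam, hlame⟩ := Module.End.exists_eigenvalue (σ gr)
  obtain ⟨v, hv⟩ := hlame.exists_hasEigenvector
  have hAv : σ gr v = lam • v := hv.apply_eq_smul
  have hv0 : v ≠ 0 := hv.right
  have hAm : (σ gr) ^ m = 1 := by rw [← map_pow, relr, _root_.map_one]
  have hlm : lam ^ m = 1 := by
    have h1 := pow_apply_smul (σ gr) v lam hAv m
    rw [hAm, Module.End.one_apply] at h1
    exact smul_cancel hv0 (show lam ^ m • v = (1 : ℂ) • v by rw [one_smul, ← h1])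
  have hl0 : lam ≠ 0 := lne0 hm hlm
  have hABv : σ gr (σ g1 v) = lam⁻¹ • σ g1 v := eig_B σ hl0 v hAv
  rcases hZsc with hZ1 | hZm1
  · -- ε = 1 : σ gz = 1
    have hZx : ∀ x : V, σ gz x = x := fun x => by rw [hZ1]; rfl
    have h01' : (σ g0 * σ g1) * (σ g0 * σ g1) = 1 := by rw [h01, hZ1]
    have h0m' : (σ g0 * σ gm) * (σ g0 * σ gm) = 1 := by rw [h0m, hZ1]
    have hcomCB := op_comm (σ g0) (σ g1) hCC hBBop h01'
    have hcomCM := op_comm (σ g0) (σ gm) hCC hMMop h0m'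
    have hCall : ∀ g : Gp m, σ g * σ g0 = σ g0 * σ g := by
      apply commute_all
      intro x
      cases x
      · rw [show (PresentedGroup.of Gen.z : Gp m) = gz from rfl, hZ1, one_mul, mul_one]
      · rfl
      · exact hcomCB.symm
      · exact hcomCM.symm
    have hCsc := schur_pm σ hirr (σ g0) hCall hCC
    obtain ⟨cb, hcb⟩ : ∃ cb : Bool, ∀ x : V, σ g0 x = cOf cb • x := by
      rcases hCsc with h | h
      · exact ⟨true, fun x => by rw [h]; simp [cOf]⟩
      · exact ⟨false, fun x => by rw [h]; simp [cOf]⟩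
    by_cases hdep : ∃ t : ℂ, σ g1 v = t • v
    · -- one-dimensional case
      obtain ⟨t, ht⟩ := hdep
      have ht0 : t ≠ 0 := by
        intro h0
        rw [h0, zero_smul] at ht
        have h2 := invol_apply σ rel1 v
        rw [ht, map_zero] at h2
        exact hv0 h2.symm
      have htt : t * t = 1 := by
        have h2 := invol_apply σ rel1 v
        rw [ht, map_smul, ht, smul_smul] at h2
        have h3 : (t * t) • v = (1 : ℂ) • v := by rw [one_smul, h2]
        exact smul_cancel hv0 h3
      have hll : lam = lam⁻¹ := by
        have h2 := hABv
        rw [ht, map_smul, hAv, smul_smul, smul_smul] at h2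
        have := smul_cancel hv0 h2
        -- t * lam = lam⁻¹ * t
        field_simp at this
        have h4 : lam * lam * t = t := by linear_combination t * this
        have h5 : lam * lam = 1 := by
          have := mul_right_cancel₀ ht0 (by linear_combination h4 : lam * lam * t = 1 * t)
          exact this
        rw [eq_comm, inv_eq_iff_eq_inv, eq_comm, inv_eq_of_mul_eq_one_right h5]
      have hlam1 : lam = 1 := by
        have h2 : lam * lam = 1 := by
          nth_rewrite 2 [hll]
          exact mul_inv_cancel₀ hl0
        have h3 : lam ^ m = (lam * lam) ^ p * lam := by
          rw [hp, pow_succ, pow_mul, sq]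
        rw [hlm, h2, one_pow, one_mul] at h3
        exact h3.symm
      obtain ⟨tb, htb⟩ : ∃ tb : Bool, cOf tb = t := by
        rcases mul_self_eq_one_iff.mp htt with h | h
        · exact ⟨true, by rw [h]; rfl⟩
        · exact ⟨false, by rw [h]; rfl⟩
      have hBt : σ g1 v = cOf tb • v := by rw [htb]; exact ht
      have hA1 : σ gr v = v := by rw [hAv, hlam1, one_smul]
      -- span {v} = ⊤
      have hspan : Submodule.span ℂ {v} = ⊤ := by
        set U := Submodule.span ℂ {v} with hU
        have hvU : v ∈ U := Submodule.mem_span_singleton_self v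
        have hgen : ∀ x : Gen, ∀ y ∈ U, σ (PresentedGroup.of x) y ∈ U := by
          intro x
          apply inv_span_singleton
          cases x
          · rw [show (PresentedGroup.of Gen.z : Gp m) = gz from rfl, hZx]; exact hvU
          · rw [show (PresentedGroup.of Gen.s0 : Gp m) = g0 from rfl, hcb]
            exact U.smul_mem _ hvU
          · rw [show (PresentedGroup.of Gen.s1 : Gp m) = g1 from rfl, ht]
            exact U.smul_mem _ hvU
          · rw [show (PresentedGroup.of Gen.sm : Gp m) = gm from rfl, gm_eq,
              sigma_mul_apply, hA1, ht]
            exact U.smul_mem _ hvU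
        rcases hirr.2 U (invariant_all σ U hgen) with hbot | htop
        · exact absurd (hbot ▸ hvU) (by simpa using hv0)
        · exact htop
      obtain ⟨hiso, hfr⟩ := build_iso1 σ tb cb v hv0 hBt (hcb v) hZx hA1 hspan
      set i : ℕ := (if tb then 0 else 1) + (if cb then 0 else 2) with hi
      have hi4 : i < 4 := by rw [hi]; cases tb <;> cases cb <;> norm_num
      have hd1 : decide (i % 2 = 0) = tb := by rw [hi]; cases tb <;> cases cb <;> rfl
      have hd2 : decide (i / 2 = 0) = cb := by rw [hi]; cases tb <;> cases cb <;> rfl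
      refine ⟨Or.inl hfr, i, by omega, ?_⟩
      rw [rhoAux_lt m hm hi4, hd1, hd2]
      exact repIso_trans (transport_iso _ _) hiso
    · -- two-dimensional case, class 1
      have hlamne : lam ≠ 1 := by
        intro h1
        have hABv1 : σ gr (σ g1 v) = σ g1 v := by
          rw [hABv, h1, inv_one, one_smul]
        set w0 := v + σ g1 v with hw0
        have hw0ne : w0 ≠ 0 := by
          intro h0
          apply hdep
          refine ⟨-1, ?_⟩
          have h2 : -v = σ g1 v := by
            rw [hw0] at h0
            exact add_eq_zero_iff_neg_eq.mp h0
          rw [← h2]; module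
        have hBw0 : σ g1 w0 = w0 := by
          rw [hw0, map_add, invol_apply σ rel1, add_comm]
        have hAw0 : σ gr w0 = w0 := by
          rw [hw0, map_add, hAv, h1, one_smul, hABv1]
        have hMw0 : σ gm w0 = w0 := by
          rw [gm_eq, sigma_mul_apply, hAw0, hBw0]
        have hspan0 : Submodule.span ℂ {w0} = ⊤ := by
          set U := Submodule.span ℂ {w0} with hU
          have hvU : w0 ∈ U := Submodule.mem_span_singleton_self w0
          have hgen : ∀ x : Gen, ∀ y ∈ U, σ (PresentedGroup.of x) y ∈ U := by
            intro x
            apply inv_span_singleton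
            cases x
            · rw [show (PresentedGroup.of Gen.z : Gp m) = gz from rfl, hZx]; exact hvU
            · rw [show (PresentedGroup.of Gen.s0 : Gp m) = g0 from rfl, hcb]
              exact U.smul_mem _ hvU
            · rw [show (PresentedGroup.of Gen.s1 : Gp m) = g1 from rfl, hBw0]; exact hvU
            · rw [show (PresentedGroup.of Gen.sm : Gp m) = gm from rfl, hMw0]; exact hvU
          rcases hirr.2 U (invariant_all σ U hgen) with hbot | htop
          · exact absurd (hbot ▸ hvU) (by simpa using hw0ne)
          · exact htop
        have hvmem : v ∈ Submodule.span ℂ {w0} := by rw [hspan0]; trivial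
        have hBvmem : σ g1 v ∈ Submodule.span ℂ {w0} := by rw [hspan0]; trivial
        obtain ⟨a, ha⟩ := Submodule.mem_span_singleton.mp hvmem
        obtain ⟨b, hb⟩ := Submodule.mem_span_singleton.mp hBvmem
        have ha0 : a ≠ 0 := by
          intro h0; rw [h0, zero_smul] at ha; exact hv0 ha.symm
        apply hdep
        refine ⟨b * a⁻¹, ?_⟩
        rw [← hb, ← ha, smul_smul]
        congr 1
        field_simp
      -- find k with ζ^k = lam
      obtain ⟨k, hkm, hkeq⟩ := (zeta_prim hm).eq_pow_of_pow_eq_one hlm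
      have hk0 : k ≠ 0 := by
        intro h0
        rw [h0, pow_zero] at hkeq
        exact hlamne hkeq.symm
      -- dichotomy k ≤ p or not
      by_cases hkp : k ≤ p
      · -- use v directly, k' = k, i depends on cb
        cases cb with
        | true =>
          set i : ℕ := 4 + (k - 1) with hidef
          have h4 : ¬ i < 4 := by omega
          have h3 : i < m + 3 := by omega
          have ek : kk1 m i = k := by
            unfold kk1
            have : i - 4 = k - 1 := by omega
            rw [this, Nat.mod_eq_of_lt (by omega)]
            omega
          have eb : bb1 m i = true := by
            unfold bb1
            simp only [decide_eq_true_eq]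
            omega
          have hA' : σ gr v = zeta m ^ kk1 m i • v := by rw [ek, hkeq]; exact hAv
          have hC' : σ g0 v = cOf (bb1 m i) • v := by rw [eb]; exact hcb v
          have hCB' : σ g0 (σ g1 v) = cOf (bb1 m i) • σ g1 v := by rw [eb]; exact hcb _
          have hZv' : ∀ x : V, σ gz x = (cOf (bb1 m i) * cOf (bb1 m i)) • x := by
            intro x; rw [cOf_sq, one_smul]; exact hZx x
          obtain ⟨hiso, hfr⟩ := build_iso2 σ hm _ _ _ (cOf_sq _) (cOf_sq _)
            (zeta_pow hm _) hirr v hv0 hA' hC' hCB' hZv' hdep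
          refine ⟨Or.inr hfr, i, by omega, ?_⟩
          rw [rhoAux_mid m hm h4 h3]
          exact repIso_trans (transport_iso _ _) hiso
        | false =>
          set i : ℕ := 4 + p + (k - 1) with hidef
          have h4 : ¬ i < 4 := by omega
          have h3 : i < m + 3 := by omega
          have ek : kk1 m i = k := by
            unfold kk1
            have h5 : i - 4 = p + (k - 1) := by omega
            have h6 : (m - 1) / 2 = p := by omega
            rw [h5, h6, Nat.mod_eq_sub_mod (by omega), Nat.add_sub_cancel_left,
              Nat.mod_eq_of_lt (by omega)]
            omega
          have eb : bb1 m i = false := by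
            unfold bb1
            simp only [decide_eq_false_iff_not]
            omega
          have hA' : σ gr v = zeta m ^ kk1 m i • v := by rw [ek, hkeq]; exact hAv
          have hC' : σ g0 v = cOf (bb1 m i) • v := by rw [eb]; exact hcb v
          have hCB' : σ g0 (σ g1 v) = cOf (bb1 m i) • σ g1 v := by rw [eb]; exact hcb _
          have hZv' : ∀ x : V, σ gz x = (cOf (bb1 m i) * cOf (bb1 m i)) • x := by
            intro x; rw [cOf_sq, one_smul]; exact hZx x
          obtain ⟨hiso, hfr⟩ := build_iso2 σ hm _ _ _ (cOf_sq _) (cOf_sq _)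
            (zeta_pow hm _) hirr v hv0 hA' hC' hCB' hZv' hdep
          refine ⟨Or.inr hfr, i, by omega, ?_⟩
          rw [rhoAux_mid m hm h4 h3]
          exact repIso_trans (transport_iso _ _) hiso
      · -- use B v, k' = m - k
        have hw1ne : σ g1 v ≠ 0 := by
          intro h0
          have h2 := invol_apply σ rel1 v
          rw [h0, map_zero] at h2
          exact hv0 h2.symm
        have hBw1 : σ g1 (σ g1 v) = v := invol_apply σ rel1 v
        rw [← hkeq, zeta_pow_inv hm (le_of_lt hkm)] at hABv
        have hnod1 : ¬ ∃ t : ℂ, σ g1 (σ g1 v) = t • σ g1 v := by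
          rintro ⟨t, ht⟩
          rw [hBw1] at ht
          have ht0 : t ≠ 0 := by
            intro h0; rw [h0, zero_smul] at ht; exact hv0 ht
          apply hdep
          refine ⟨t, ?_⟩
          have h5 := congrArg (σ g1) ht
          rw [map_smul, hBw1] at h5
          exact h5
        cases cb with
        | true =>
          set i : ℕ := 4 + (m - k - 1) with hidef
          have h4 : ¬ i < 4 := by omega
          have h3 : i < m + 3 := by omega
          have ek : kk1 m i = m - k := by
            unfold kk1
            have h5 : i - 4 = m - k - 1 := by omega
            have h6 : (m - 1) / 2 = p := by omega
            rw [h5, h6, Nat.mod_eq_of_lt (by omega)]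
            omega
          have eb : bb1 m i = true := by
            unfold bb1; simp only [decide_eq_true_eq]; omega
          have hA' : σ gr (σ g1 v) = zeta m ^ kk1 m i • σ g1 v := by rw [ek]; exact hABv
          have hC' : σ g0 (σ g1 v) = cOf (bb1 m i) • σ g1 v := by rw [eb]; exact hcb _
          have hCB' : σ g0 (σ g1 (σ g1 v)) = cOf (bb1 m i) • σ g1 (σ g1 v) := by
            rw [eb]; exact hcb _
          have hZv' : ∀ x : V, σ gz x = (cOf (bb1 m i) * cOf (bb1 m i)) • x := by
            intro x; rw [cOf_sq, one_smul]; exact hZx x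
          obtain ⟨hiso, hfr⟩ := build_iso2 σ hm _ _ _ (cOf_sq _) (cOf_sq _)
            (zeta_pow hm _) hirr (σ g1 v) hw1ne hA' hC' hCB' hZv' hnod1
          refine ⟨Or.inr hfr, i, by omega, ?_⟩
          rw [rhoAux_mid m hm h4 h3]
          exact repIso_trans (transport_iso _ _) hiso
        | false =>
          set i : ℕ := 4 + p + (m - k - 1) with hidef
          have h4 : ¬ i < 4 := by omega
          have h3 : i < m + 3 := by omega
          have ek : kk1 m i = m - k := by
            unfold kk1
            have h5 : i - 4 = p + (m - k - 1) := by omega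
            have h6 : (m - 1) / 2 = p := by omega
            rw [h5, h6, Nat.mod_eq_sub_mod (by omega), Nat.add_sub_cancel_left,
              Nat.mod_eq_of_lt (by omega)]
            omega
          have eb : bb1 m i = false := by
            unfold bb1; simp only [decide_eq_false_iff_not]; omega
          have hA' : σ gr (σ g1 v) = zeta m ^ kk1 m i • σ g1 v := by rw [ek]; exact hABv
          have hC' : σ g0 (σ g1 v) = cOf (bb1 m i) • σ g1 v := by rw [eb]; exact hcb _
          have hCB' : σ g0 (σ g1 (σ g1 v)) = cOf (bb1 m i) • σ g1 (σ g1 v) := by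
            rw [eb]; exact hcb _
          have hZv' : ∀ x : V, σ gz x = (cOf (bb1 m i) * cOf (bb1 m i)) • x := by
            intro x; rw [cOf_sq, one_smul]; exact hZx x
          obtain ⟨hiso, hfr⟩ := build_iso2 σ hm _ _ _ (cOf_sq _) (cOf_sq _)
            (zeta_pow hm _) hirr (σ g1 v) hw1ne hA' hC' hCB' hZv' hnod1
          refine ⟨Or.inr hfr, i, by omega, ?_⟩
          rw [rhoAux_mid m hm h4 h3]
          exact repIso_trans (transport_iso _ _) hiso
  · -- ε = -1 : σ gz = -1
    have hZx : ∀ x : V, σ gz x = -x := fun x => by rw [hZm1]; simp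
    have h01' : (σ g0 * σ g1) * (σ g0 * σ g1) = -1 := by rw [h01, hZm1]
    have hanti := op_anticomm (σ g0) (σ g1) hCC hBBop h01'
    -- commuting of σ g0 with σ gr at v
    have hACv : σ gr (σ g0 v) = lam • σ g0 v := by
      rw [← sigma_mul_apply, ← comm0r, sigma_mul_apply, hAv, map_smul]
    have key : ∃ (w : V) (mu : ℂ), w ≠ 0 ∧ σ gr w = lam • w ∧ σ g0 w = mu • w ∧
        (mu = 1 ∨ mu = -1) := by
      by_cases hw'0 : σ g0 v + v = 0
      · refine ⟨v, -1, hv0, hAv, ?_, Or.inr rfl⟩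
        have : σ g0 v = -v := by
          rw [add_eq_zero_iff_eq_neg] at hw'0; exact hw'0
        rw [this]; module
      · refine ⟨σ g0 v + v, 1, hw'0, ?_, ?_, Or.inl rfl⟩
        · rw [map_add, hACv, hAv, smul_add]
        · rw [map_add, invol_apply σ rel0 v, one_smul, add_comm]
    obtain ⟨w, mu, hwne, hAw, hCw, hmu⟩ := key
    have hmu0 : mu ≠ 0 := by rcases hmu with h | h <;> rw [h] <;> norm_num
    have hCBw : σ g0 (σ g1 w) = (-mu) • σ g1 w := by
      have h2 : σ g0 (σ g1 w) = -(σ g1 (σ g0 w)) := by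
        have h3 := congrArg (fun (f : Module.End ℂ V) => f w) hanti
        simpa [Module.End.mul_apply] using h3
      rw [h2, hCw, map_smul, ← neg_smul]
    have hnod : ¬ ∃ t : ℂ, σ g1 w = t • w := by
      rintro ⟨t, ht⟩
      have ht0 : t ≠ 0 := by
        intro h0; rw [h0, zero_smul] at ht
        have h2 := invol_apply σ rel1 w
        rw [ht, map_zero] at h2
        exact hwne h2.symm
      have h2 := hCBw
      rw [ht, map_smul, hCw, smul_smul, smul_smul] at h2
      have h3 := smul_cancel hwne h2
      -- t * mu = -mu * t
      have h4 : t * mu = 0 := by linear_combination h3 / 2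
      rcases mul_eq_zero.mp h4 with h | h
      · exact ht0 h
      · exact hmu0 h
    rcases hmu with hmu1 | hmum1
    · -- mu = 1 : use w, l = lam
      obtain ⟨k, hkm, hkeq⟩ := (zeta_prim hm).eq_pow_of_pow_eq_one hlm
      set i : ℕ := m + 3 + k with hidef
      have h4 : ¬ i < 4 := by omega
      have h3 : ¬ i < m + 3 := by omega
      have ek : kk2 m i = k := by unfold kk2; omega
      have hA' : σ gr w = zeta m ^ kk2 m i • w := by rw [ek, hkeq]; exact hAw
      have hC' : σ g0 w = (1 : ℂ) • w := by rw [one_smul, hCw, hmu1, one_smul]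
      have hCB' : σ g0 (σ g1 w) = (-1 : ℂ) • σ g1 w := by
        rw [hCBw, hmu1]
      have hZv' : ∀ x : V, σ gz x = ((1 : ℂ) * (-1)) • x := by
        intro x; rw [hZx]; module
      obtain ⟨hiso, hfr⟩ := build_iso2 σ hm _ 1 (-1) (by norm_num) (by norm_num)
        (zeta_pow hm _) hirr w hwne hA' hC' hCB' hZv' hnod
      refine ⟨Or.inr hfr, i, by omega, ?_⟩
      rw [rhoAux_hi m hm h4 h3]
      exact repIso_trans (transport_iso _ _) hiso
    · -- mu = -1 : use σ g1 w, l = lam⁻¹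
      have hw1ne : σ g1 w ≠ 0 := by
        intro h0
        have h2 := invol_apply σ rel1 w
        rw [h0, map_zero] at h2
        exact hwne h2.symm
      have hBw1 : σ g1 (σ g1 w) = w := invol_apply σ rel1 w
      have hlm' : (lam⁻¹) ^ m = 1 := by rw [inv_pow, hlm, inv_one]
      have hA1 : σ gr (σ g1 w) = lam⁻¹ • σ g1 w := eig_B σ hl0 w hAw
      have hC1 : σ g0 (σ g1 w) = (1 : ℂ) • σ g1 w := by
        rw [one_smul, hCBw, hmum1, neg_neg, one_smul]
      have hCB1 : σ g0 (σ g1 (σ g1 w)) = (-1 : ℂ) • σ g1 (σ g1 w) := by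
        rw [hBw1, hCw, hmum1]
      have hnod1 : ¬ ∃ t : ℂ, σ g1 (σ g1 w) = t • σ g1 w := by
        rintro ⟨t, ht⟩
        rw [hBw1] at ht
        have ht0 : t ≠ 0 := by
          intro h0; rw [h0, zero_smul] at ht; exact hwne ht
        apply hnod
        refine ⟨t, ?_⟩
        have h5 := congrArg (σ g1) ht
        rw [map_smul, hBw1] at h5
        exact h5
      obtain ⟨k, hkm, hkeq⟩ := (zeta_prim hm).eq_pow_of_pow_eq_one hlm'
      set i : ℕ := m + 3 + k with hidef
      have h4 : ¬ i < 4 := by omega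
      have h3 : ¬ i < m + 3 := by omega
      have ek : kk2 m i = k := by unfold kk2; omega
      have hA' : σ gr (σ g1 w) = zeta m ^ kk2 m i • σ g1 w := by rw [ek, hkeq]; exact hA1
      have hZv' : ∀ x : V, σ gz x = ((1 : ℂ) * (-1)) • x := by
        intro x; rw [hZx]; module
      obtain ⟨hiso, hfr⟩ := build_iso2 σ hm _ 1 (-1) (by norm_num) (by norm_num)
        (zeta_pow hm _) hirr (σ g1 w) hw1ne hA' hC1 hCB1 hZv' hnod1
      refine ⟨Or.inr hfr, i, by omega, ?_⟩
      rw [rhoAux_hi m hm h4 h3]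
      exact repIso_trans (transport_iso _ _) hiso

end Master

end WAux
namespace WAux

lemma filter_lt_card (n k : ℕ) (h : k ≤ n) :
    (Finset.univ.filter fun i : Fin n => (i : ℕ) < k).card = k := by
  have heq : Finset.univ.filter (fun i : Fin n => (i : ℕ) < k)
      = Finset.map (Fin.castLEEmb h) Finset.univ := by
    ext i
    simp only [Finset.mem_filter, Finset.mem_univ, true_and, Finset.mem_map]
    constructor
    · intro hik
      exact ⟨⟨i.1, hik⟩, Fin.ext rfl⟩
    · rintro ⟨j, rfl⟩
      exact j.2
  rw [heq, Finset.card_map, Finset.card_univ, Fintype.card_fin]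

end WAux

open WAux in
theorem WposOdd_irreps' (m : ℕ) (hm : 3 ≤ m) (hodd : Odd m) :
    ∃ (d : Fin (2 * m + 3) → ℕ)
      (ρ : ∀ i : Fin (2 * m + 3), Representation ℂ (PresentedGroup (relsOddPos m))
        (Fin (d i) → ℂ)),
      (∀ i, IsIrreducibleRep (ρ i)) ∧
      (∀ i j, i ≠ j → ¬ RepIso (ρ i) (ρ j)) ∧
      (∀ (V : Type*) [AddCommGroup V] [Module ℂ V]
        (σ : Representation ℂ (PresentedGroup (relsOddPos m)) V),
        FiniteDimensional ℂ V → IsIrreducibleRep σ →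
          (Module.finrank ℂ V = 1 ∨ Module.finrank ℂ V = 2) ∧ ∃ i, RepIso (ρ i) σ) ∧
      (∀ i, d i = 1 ∨ d i = 2) ∧
      (Finset.univ.filter fun i => d i = 1).card = 4 ∧
      (Finset.univ.filter fun i => d i = 2).card = 2 * m - 1 := by
  have hm0 : m ≠ 0 := by omega
  refine ⟨fun i => dd i.1, fun i => rhoAux m hm0 i.1, ?_, ?_, ?_, ?_, ?_, ?_⟩
  · intro i
    exact rhoAux_irr hm0 hm hodd i.1
  · intro i j hij hiso
    exact rho_noniso hm0 hm hodd i.2 j.2 (fun h => hij (Fin.val_injective h)) hiso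
  · intro V _ _ σ hfd hirr
    haveI := hfd
    obtain ⟨hdim, i, hi, hiso⟩ := complete σ hm hodd hm0 hirr
    exact ⟨hdim, ⟨i, hi⟩, hiso⟩
  · intro i
    show dd i.1 = 1 ∨ dd i.1 = 2
    by_cases h : (i : ℕ) < 4
    · exact Or.inl (dd_lt h)
    · exact Or.inr (dd_ge h)
  · have heq : (Finset.univ.filter fun i : Fin (2*m+3) => dd i.1 = 1)
        = Finset.univ.filter fun i : Fin (2*m+3) => (i : ℕ) < 4 := by
      ext i
      simp only [Finset.mem_filter, Finset.mem_univ, true_and]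
      by_cases h : (i : ℕ) < 4
      · simp [dd_lt h, h]
      · simp [dd_ge h, h]
    rw [heq, filter_lt_card (2*m+3) 4 (by omega)]
  · have heq : (Finset.univ.filter fun i : Fin (2*m+3) => dd i.1 = 2)
        = Finset.univ.filter fun i : Fin (2*m+3) => ¬ (i : ℕ) < 4 := by
      ext i
      simp only [Finset.mem_filter, Finset.mem_univ, true_and]
      by_cases h : (i : ℕ) < 4
      · simp [dd_lt h, h]
      · simp [dd_ge h, h]
    rw [heq, Finset.filter_not, Finset.card_sdiff_of_subset (Finset.filter_subset _ _),
      filter_lt_card (2*m+3) 4 (by omega), Finset.card_univ, Fintype.card_fin]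
    omega

/-- For odd `m ≥ 3`, the positive double covering `Ŵ⁺` of `ℤ₂ × D_{2m}` has, up to
isomorphism, exactly `2m + 3` irreducible finite-dimensional complex representations;
every such representation has dimension `1` or `2`, exactly `4` of them have
dimension `1` and exactly `2m − 1` of them have dimension `2`. -/
theorem WposOdd_irreps (m : ℕ) (hm : 3 ≤ m) (hodd : Odd m) :
    ∃ (d : Fin (2 * m + 3) → ℕ)
      (ρ : ∀ i : Fin (2 * m + 3), Representation ℂ (PresentedGroup (relsOddPos m))
        (Fin (d i) → ℂ)),
      (∀ i, IsIrreducibleRep (ρ i)) ∧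
      (∀ i j, i ≠ j → ¬ RepIso (ρ i) (ρ j)) ∧
      (∀ (V : Type*) [AddCommGroup V] [Module ℂ V]
        (σ : Representation ℂ (PresentedGroup (relsOddPos m)) V),
        FiniteDimensional ℂ V → IsIrreducibleRep σ →
          (Module.finrank ℂ V = 1 ∨ Module.finrank ℂ V = 2) ∧ ∃ i, RepIso (ρ i) σ) ∧
      (∀ i, d i = 1 ∨ d i = 2) ∧
      (Finset.univ.filter fun i => d i = 1).card = 4 ∧
      (Finset.univ.filter fun i => d i = 2).card = 2 * m - 1 := by
  exact WposOdd_irreps' m hm hodd
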